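/- arXiv:1805.03065 — 8 statements merged into one kernel-verified Lean document; each statement's English description precedes it below -/
import Mathlib

section
/- Let Ω ⊂ ℝ^k be an open convex cone not containing any affine line. Then the isotropy subgroup G_x(Ω) = {A ∈ GL_k(ℝ) : AΩ = Ω, Ax = x} of any point x ∈ Ω is compact. -/
open Matrix Set Filter Topology

/-- The isotropy subgroup of a point of an open convex cone containing no
affine line is compact (as a set of matrices). -/
theorem stmt_0 (k : ℕ) (Ω : Set (Fin k → ℝ)) (hΩopen : IsOpen Ω) (hne : Ω.Nonempty)
    (hcone : ∀ x ∈ Ω, ∀ y ∈ Ω, ∀ a b : ℝ, 0 < a → 0 < b → a • x + b • y ∈ Ω)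
    (hline : ¬ ∃ x v : Fin k → ℝ, v ≠ 0 ∧ ∀ t : ℝ, x + t • v ∈ Ω)
    (x : Fin k → ℝ) (hx : x ∈ Ω) :
    IsCompact {A : Matrix (Fin k) (Fin k) ℝ |
      IsUnit A ∧ A.mulVec '' Ω = Ω ∧ A.mulVec x = x} := by
  classical
  set S : Set (Matrix (Fin k) (Fin k) ℝ) :=
    {A | IsUnit A ∧ A.mulVec '' Ω = Ω ∧ A.mulVec x = x} with hSdef
  -- positive scalings stay in the cone
  have hsmul : ∀ a : ℝ, 0 < a → ∀ y ∈ Ω, a • y ∈ Ω := by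
    intro a ha y hy
    have h := hcone y hy y hy (a / 2) (a / 2) (by linarith) (by linarith)
    rwa [← add_smul, add_halves] at h
  -- convexity
  have hconv : Convex ℝ Ω := by
    intro u hu v hv a b ha hb hab
    rcases ha.lt_or_eq with ha' | ha'
    · rcases hb.lt_or_eq with hb' | hb'
      · exact hcone u hu v hv a b ha' hb'
      · have : a = 1 := by linarith [hab]
        simp [← hb', this, hu]
    · have : b = 1 := by linarith [hab]
      simp [← ha', this, hv]
  -- 0 is in the closure
  have hzero_cl : (0 : Fin k → ℝ) ∈ closure Ω := by
    have ht : Tendsto (fun n : ℕ => (1 / (n + 1) : ℝ) • x) atTop (𝓝 ((0 : ℝ) • x)) :=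
      tendsto_one_div_add_atTop_nhds_zero_nat.smul_const x
    rw [zero_smul] at ht
    exact mem_closure_of_tendsto ht
      (Eventually.of_forall fun n => hsmul _ (by positivity) x hx)
  -- the closure is closed under nonnegative scalings
  have hclsmul : ∀ a : ℝ, 0 ≤ a → ∀ w ∈ closure Ω, a • w ∈ closure Ω := by
    intro a ha w hw
    rcases ha.lt_or_eq with ha' | ha'
    · have h1 : (a • ·) '' closure Ω ⊆ closure ((a • ·) '' Ω) :=
        image_closure_subset_closure_image (continuous_const_smul a)
      have h2 : (a • ·) '' Ω ⊆ Ω := by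
        rintro _ ⟨y, hy, rfl⟩; exact hsmul a ha' y hy
      exact closure_mono h2 (h1 ⟨w, hw, rfl⟩)
    · rw [← ha', zero_smul]; exact hzero_cl
  -- an interior point plus a closure point is an interior point
  have hadd_cl : ∀ y ∈ Ω, ∀ c ∈ closure Ω, y + c ∈ Ω := by
    intro y hy c hc
    have h2y : (2 : ℝ) • y ∈ interior Ω := by
      rw [hΩopen.interior_eq]; exact hsmul 2 two_pos y hy
    have h2c : (2 : ℝ) • c ∈ closure Ω := hclsmul 2 (by norm_num) c hc
    have h := hconv.combo_interior_closure_mem_interior h2y h2c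
      (a := 1 / 2) (b := 1 / 2) (by norm_num) (by norm_num) (by norm_num)
    rw [smul_smul, smul_smul] at h
    norm_num at h
    rwa [hΩopen.interior_eq] at h
  -- there are no opposite closure directions
  have hopp : ∀ w : Fin k → ℝ, w ∈ closure Ω → -w ∈ closure Ω → w = 0 := by
    intro w hw hw'
    by_contra hw0
    apply hline
    refine ⟨x, w, hw0, fun t => ?_⟩
    rcases le_or_gt 0 t with ht | ht
    · exact hadd_cl x hx _ (hclsmul t ht w hw)
    · have : t • w = (-t) • (-w) := by rw [neg_smul, smul_neg, neg_neg]
      rw [this]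
      exact hadd_cl x hx _ (hclsmul (-t) (by linarith) _ hw')
  -- the set Ω ∩ (x - Ω) is bounded
  have hUbdd : ∃ R : ℝ, ∀ u ∈ Ω, x - u ∈ Ω → ‖u‖ ≤ R := by
    by_contra h
    push_neg at h
    choose u hu1 hu2 hu3 using fun n : ℕ => h (n + 1)
    have hn : ∀ n : ℕ, (0 : ℝ) < ‖u n‖ := fun n => lt_trans (by positivity) (hu3 n)
    set w : ℕ → Fin k → ℝ := fun n => ‖u n‖⁻¹ • u n with hwdef
    have hws : ∀ n, w n ∈ Metric.sphere (0 : Fin k → ℝ) 1 := by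
      intro n
      rw [mem_sphere_zero_iff_norm, hwdef]
      simp [norm_smul, abs_of_pos (inv_pos.2 (hn n)), inv_mul_cancel₀ (hn n).ne']
    obtain ⟨wl, hwl, φ, hφ, hwlim⟩ :=
      (isCompact_sphere (0 : Fin k → ℝ) 1).tendsto_subseq hws
    have hwl1 : ‖wl‖ = 1 := mem_sphere_zero_iff_norm.1 hwl
    have hwlcl : wl ∈ closure Ω :=
      mem_closure_of_tendsto hwlim
        (Eventually.of_forall fun n => hsmul _ (inv_pos.2 (hn (φ n))) _ (hu1 (φ n)))
    -- the inverse norms tend to zero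
    have hinv0 : Tendsto (fun n : ℕ => ‖u (φ n)‖⁻¹) atTop (𝓝 0) := by
      apply squeeze_zero (fun n => by positivity) (g := fun n : ℕ => 1 / (n + 1 : ℝ))
      · intro n
        rw [one_div]
        apply inv_anti₀ (by positivity)
        calc ((n : ℝ) + 1) ≤ (φ n : ℝ) + 1 := by
              have hle : (n : ℝ) ≤ (φ n : ℝ) := by exact_mod_cast hφ.le_apply
              linarith
          _ ≤ ‖u (φ n)‖ := (hu3 (φ n)).le
      · exact tendsto_one_div_add_atTop_nhds_zero_nat
    have hnegcl : -wl ∈ closure Ω := by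
      have hz : ∀ n : ℕ, ‖u (φ n)‖⁻¹ • (x - u (φ n)) ∈ Ω :=
        fun n => hsmul _ (inv_pos.2 (hn (φ n))) _ (hu2 (φ n))
      have hzlim : Tendsto (fun n : ℕ => ‖u (φ n)‖⁻¹ • (x - u (φ n))) atTop (𝓝 (-wl)) := by
        have h1 : Tendsto (fun n : ℕ => ‖u (φ n)‖⁻¹ • x) atTop (𝓝 ((0 : ℝ) • x)) :=
          hinv0.smul_const x
        rw [zero_smul] at h1
        have h2 := h1.sub hwlim
        rw [zero_sub] at h2
        convert h2 using 2 with n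
        simp [smul_sub, hwdef, Function.comp]
      exact mem_closure_of_tendsto hzlim (Eventually.of_forall hz)
    have := hopp wl hwlcl hnegcl
    rw [this] at hwl1
    simp at hwl1
  obtain ⟨R, hR⟩ := hUbdd
  -- the midpoint and a ball around it inside Ω ∩ (x - Ω)
  set p : Fin k → ℝ := (2⁻¹ : ℝ) • x with hpdef
  have hp : p ∈ Ω := hsmul _ (by norm_num) x hx
  have hxp : x - p = p := by
    rw [hpdef, sub_eq_iff_eq_add, ← add_smul]; norm_num
  have hUopen : IsOpen (Ω ∩ (fun y => x - y) ⁻¹' Ω) :=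
    hΩopen.inter (hΩopen.preimage (continuous_const.sub continuous_id))
  have hpU : p ∈ Ω ∩ (fun y => x - y) ⁻¹' Ω := ⟨hp, by simp only [mem_preimage, hxp]; exact hp⟩
  obtain ⟨r, hr, hball⟩ := Metric.isOpen_iff.1 hUopen p hpU
  set C : ℝ := (R + ‖p‖) / (r / 2) with hCdef
  -- the compact box
  set K : Set (Matrix (Fin k) (Fin k) ℝ) := {A | ∀ i j, A i j ∈ Set.Icc (-C) C} with hKdef
  have hKcpt : IsCompact K := by
    have h : IsCompact (Set.univ.pi fun _ : Fin k => Set.univ.pi fun _ : Fin k =>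
        Set.Icc (-C) C) :=
      isCompact_univ_pi fun _ => isCompact_univ_pi fun _ => isCompact_Icc
    have he : K = (Set.univ.pi fun _ : Fin k => Set.univ.pi fun _ : Fin k =>
        Set.Icc (-C) C) := by
      ext A
      constructor
      · intro hA i _ j _
        exact hA i j
      · intro hA i j
        exact hA i (Set.mem_univ i) j (Set.mem_univ j)
    rw [he]; exact h
  -- elements of S have bounded entries
  have hSbox : S ⊆ K := by
    rintro A ⟨hAunit, hAΩ, hAx⟩
    have hApres : ∀ y ∈ Ω, A.mulVec y ∈ Ω := fun y hy => hAΩ ▸ mem_image_of_mem _ hy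
    have hAp : A.mulVec p = p := by
      rw [hpdef, Matrix.mulVec_smul, hAx]
    intro i j
    set v : Fin k → ℝ := (r / 2) • (Pi.single j 1 : Fin k → ℝ) with hvdef
    have hvnorm : ‖v‖ ≤ r / 2 := by
      rw [hvdef, norm_smul]
      have h1 : ‖(Pi.single j 1 : Fin k → ℝ)‖ ≤ 1 := by
        apply pi_norm_le_iff_of_nonneg zero_le_one |>.2
        intro i'
        rcases eq_or_ne i' j with h | h <;> simp [Pi.single_apply, h]
      calc ‖(r / 2 : ℝ)‖ * ‖(Pi.single j 1 : Fin k → ℝ)‖ ≤ ‖(r / 2 : ℝ)‖ * 1 := by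
            apply mul_le_mul_of_nonneg_left h1 (norm_nonneg _)
        _ = r / 2 := by rw [mul_one, Real.norm_eq_abs, abs_of_pos (by linarith)]
    have hpv : p + v ∈ Metric.ball p r := by
      rw [Metric.mem_ball, dist_eq_norm, add_sub_cancel_left]
      linarith
    obtain ⟨hpv1, hpv2⟩ := hball hpv
    have hApv : A.mulVec (p + v) ∈ Ω := hApres _ hpv1
    have hApv2 : x - A.mulVec (p + v) ∈ Ω := by
      have : x - A.mulVec (p + v) = A.mulVec (x - (p + v)) := by
        rw [Matrix.mulVec_sub, hAx]
      rw [this]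
      exact hApres _ hpv2
    have hnormA : ‖A.mulVec (p + v)‖ ≤ R := hR _ hApv hApv2
    have hsplit : A.mulVec (p + v) = p + A.mulVec v := by
      rw [Matrix.mulVec_add, hAp]
    have hAv : ‖A.mulVec v‖ ≤ R + ‖p‖ := by
      have : A.mulVec v = A.mulVec (p + v) - p := by rw [hsplit]; abel
      rw [this]
      calc ‖A.mulVec (p + v) - p‖ ≤ ‖A.mulVec (p + v)‖ + ‖p‖ := norm_sub_le _ _
        _ ≤ R + ‖p‖ := by linarith
    have hentry : (A.mulVec v) i = (r / 2) * A i j := by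
      rw [hvdef, Matrix.mulVec_smul, Matrix.mulVec_single]
      simp [mul_comm]
    have habs : |(r / 2) * A i j| ≤ R + ‖p‖ := by
      rw [← hentry]
      calc |(A.mulVec v) i| = ‖(A.mulVec v) i‖ := rfl
        _ ≤ ‖A.mulVec v‖ := norm_le_pi_norm _ i
        _ ≤ R + ‖p‖ := hAv
    have hfin : |A i j| ≤ C := by
      rw [abs_mul, abs_of_pos (by linarith : (0:ℝ) < r / 2)] at habs
      rw [hCdef, le_div_iff₀ (by linarith : (0:ℝ) < r / 2)]
      linarith [habs]
    exact abs_le.1 hfin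
  -- S is closed under inverses
  have hinvS : ∀ B ∈ S, B⁻¹ ∈ S := by
    rintro B ⟨hBu, hBΩ, hBx⟩
    have hdet : IsUnit B.det := (Matrix.isUnit_iff_isUnit_det B).1 hBu
    have hBinv_mul : B⁻¹ * B = 1 := Matrix.nonsing_inv_mul B hdet
    have hmul_Binv : B * B⁻¹ = 1 := Matrix.mul_nonsing_inv B hdet
    have hcomp : ∀ y, B⁻¹.mulVec (B.mulVec y) = y := by
      intro y; rw [Matrix.mulVec_mulVec, hBinv_mul, Matrix.one_mulVec]
    have hBinvu : IsUnit B⁻¹ := by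
      apply (Matrix.isUnit_iff_isUnit_det _).2
      apply IsUnit.of_mul_eq_one B.det
      rw [← Matrix.det_mul, hBinv_mul, Matrix.det_one]
    refine ⟨hBinvu, ?_, ?_⟩
    · have hco : B⁻¹.mulVec ∘ B.mulVec = id := funext hcomp
      calc B⁻¹.mulVec '' Ω = B⁻¹.mulVec '' (B.mulVec '' Ω) := by rw [hBΩ]
        _ = (B⁻¹.mulVec ∘ B.mulVec) '' Ω := (Set.image_comp _ _ _).symm
        _ = Ω := by rw [hco, Set.image_id]
    · calc B⁻¹.mulVec x = B⁻¹.mulVec (B.mulVec x) := by rw [hBx]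
        _ = x := hcomp x
  -- stretching a point of Ω slightly away from x
  have hstretch : ∀ y ∈ Ω, ∃ z ∈ Ω, ∃ s : ℝ, 0 < s ∧ s ≤ 1 ∧
      y = s • x + (1 - s) • z := by
    intro y hy
    obtain ⟨ε, hε, hball'⟩ := Metric.isOpen_iff.1 hΩopen y hy
    set t : ℝ := ε / (2 * (‖y - x‖ + 1)) with htdef
    have ht : 0 < t := by
      apply div_pos hε
      positivity
    have hz : y + t • (y - x) ∈ Ω := by
      apply hball'
      rw [Metric.mem_ball, dist_eq_norm, add_sub_cancel_left, norm_smul,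
        Real.norm_eq_abs, abs_of_pos ht]
      calc t * ‖y - x‖ ≤ t * (‖y - x‖ + 1) := by nlinarith [norm_nonneg (y - x)]
        _ = ε / 2 := by
            rw [htdef]; field_simp
        _ < ε := by linarith
    refine ⟨y + t • (y - x), hz, t / (1 + t), by positivity, ?_, ?_⟩
    · rw [div_le_one (by linarith)]; linarith
    · have h1t : (1 + t : ℝ) ≠ 0 := by positivity
      funext i
      simp only [Pi.add_apply, Pi.smul_apply, Pi.sub_apply, smul_eq_mul]
      field_simp
      ring
  -- S is closed
  have hSclosed : IsClosed S := by
    haveI : FrechetUrysohnSpace (Matrix (Fin k) (Fin k) ℝ) := by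
      have h : FrechetUrysohnSpace (Fin k → Fin k → ℝ) := inferInstance
      exact h
    haveI : FirstCountableTopology (Matrix (Fin k) (Fin k) ℝ) := by
      have h : FirstCountableTopology (Fin k → Fin k → ℝ) := inferInstance
      exact h
    apply IsSeqClosed.isClosed
    intro A' A hA'mem hA'lim
    have hA'invm : ∀ n, (A' n)⁻¹ ∈ S := fun n => hinvS _ (hA'mem n)
    obtain ⟨B, hBK, φ, hφ, hBlim⟩ := hKcpt.tendsto_subseq fun n => hSbox (hA'invm n)
    have hA'lim' : Tendsto (fun n => A' (φ n)) atTop (𝓝 A) :=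
      hA'lim.comp hφ.tendsto_atTop
    have hBlim' : Tendsto (fun n => (A' (φ n))⁻¹) atTop (𝓝 B) := hBlim
    -- A * B = 1
    have hmulAB : A * B = 1 := by
      have h1 : Tendsto (fun n => A' (φ n) * (A' (φ n))⁻¹) atTop (𝓝 (A * B)) :=
        hA'lim'.mul hBlim'
      have h2 : (fun n => A' (φ n) * (A' (φ n))⁻¹) = fun _ => (1 : Matrix (Fin k) (Fin k) ℝ) := by
        funext n
        exact Matrix.mul_nonsing_inv _
          ((Matrix.isUnit_iff_isUnit_det _).1 (hA'mem (φ n)).1)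
      rw [h2] at h1
      exact (tendsto_nhds_unique tendsto_const_nhds h1).symm
    have hmulBA : B * A = 1 := by
      have h1 : Tendsto (fun n => (A' (φ n))⁻¹ * A' (φ n)) atTop (𝓝 (B * A)) :=
        hBlim'.mul hA'lim'
      have h2 : (fun n => (A' (φ n))⁻¹ * A' (φ n)) = fun _ => (1 : Matrix (Fin k) (Fin k) ℝ) := by
        funext n
        exact Matrix.nonsing_inv_mul _
          ((Matrix.isUnit_iff_isUnit_det _).1 (hA'mem (φ n)).1)
      rw [h2] at h1
      exact (tendsto_nhds_unique tendsto_const_nhds h1).symm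
    -- mulVec limits
    have hmv : ∀ (M : ℕ → Matrix (Fin k) (Fin k) ℝ) (Ml : Matrix (Fin k) (Fin k) ℝ),
        Tendsto M atTop (𝓝 Ml) → ∀ v : Fin k → ℝ,
        Tendsto (fun n => (M n).mulVec v) atTop (𝓝 (Ml.mulVec v)) := by
      intro M Ml hM v
      exact ((continuous_id.matrix_mulVec continuous_const).tendsto Ml).comp hM
    have hAx : A.mulVec x = x := by
      have h1 := hmv _ _ hA'lim' x
      have h2 : (fun n => (A' (φ n)).mulVec x) = fun _ => x := by
        funext n; exact (hA'mem (φ n)).2.2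
      rw [h2] at h1
      exact tendsto_nhds_unique h1 tendsto_const_nhds
    have hBx : B.mulVec x = x := by
      have h1 := hmv _ _ hBlim' x
      have h2 : (fun n => ((A' (φ n))⁻¹).mulVec x) = fun _ => x := by
        funext n; exact (hA'invm (φ n)).2.2
      rw [h2] at h1
      exact tendsto_nhds_unique h1 tendsto_const_nhds
    have hAcl : ∀ y ∈ Ω, A.mulVec y ∈ closure Ω := by
      intro y hy
      apply mem_closure_of_tendsto (hmv _ _ hA'lim' y)
      apply Eventually.of_forall
      intro n
      exact (hA'mem (φ n)).2.1 ▸ mem_image_of_mem _ hy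
    have hBcl : ∀ y ∈ Ω, B.mulVec y ∈ closure Ω := by
      intro y hy
      apply mem_closure_of_tendsto (hmv _ _ hBlim' y)
      apply Eventually.of_forall
      intro n
      exact (hA'invm (φ n)).2.1 ▸ mem_image_of_mem _ hy
    -- limits preserve Ω using the stretching trick
    have hval : ∀ (M : Matrix (Fin k) (Fin k) ℝ), M.mulVec x = x →
        (∀ y ∈ Ω, M.mulVec y ∈ closure Ω) → ∀ y ∈ Ω, M.mulVec y ∈ Ω := by
      intro M hMx hMcl y hy
      obtain ⟨z, hz, s, hs0, hs1, hyeq⟩ := hstretch y hy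
      have heq : M.mulVec y = s • x + (1 - s) • M.mulVec z := by
        rw [hyeq, Matrix.mulVec_add, Matrix.mulVec_smul, Matrix.mulVec_smul, hMx]
      rw [heq]
      have h := hconv.combo_interior_closure_mem_interior
        (x := x) (y := M.mulVec z)
        (by rw [hΩopen.interior_eq]; exact hx) (hMcl z hz)
        (a := s) (b := 1 - s) hs0 (by linarith) (by ring)
      rwa [hΩopen.interior_eq] at h
    have hAval : ∀ y ∈ Ω, A.mulVec y ∈ Ω := hval A hAx hAcl
    have hBval : ∀ y ∈ Ω, B.mulVec y ∈ Ω := hval B hBx hBcl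
    have hAu : IsUnit A := by
      apply (Matrix.isUnit_iff_isUnit_det _).2
      apply IsUnit.of_mul_eq_one B.det
      rw [← Matrix.det_mul, hmulAB, Matrix.det_one]
    refine ⟨hAu, ?_, hAx⟩
    apply Set.Subset.antisymm
    · rintro _ ⟨y, hy, rfl⟩
      exact hAval y hy
    · intro y hy
      refine ⟨B.mulVec y, hBval y hy, ?_⟩
      rw [Matrix.mulVec_mulVec, hmulAB, Matrix.one_mulVec]
  exact hKcpt.of_isClosed_subset hSclosed hSbox
end

section
/- Let H be an r×r Hermitian matrix and let K = {B ∈ 𝔤𝔩_r(ℂ) : Bᵀ + conj(B) = 0 and Bᵀ H + H conj(B) = 0} be the space of skew-Hermitian matrices that are also skew-Hermitian with respect to H. Then dim_ℝ K = r² − 2p, where p is the number of pairs (i,j) with i < j such that the i-th and j-th eigenvalues of H are distinct (counted with multiplicity as a multiset of eigenvalues). -/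
open Finset

lemma count_lt (r : ℕ) :
    2 * Fintype.card {p : Fin r × Fin r // p.1 < p.2} + r = r ^ 2 := by
  have hlt_gt : Fintype.card {p : Fin r × Fin r // p.1 < p.2}
      = Fintype.card {p : Fin r × Fin r // p.2 < p.1} :=
    Fintype.card_congr ((Equiv.prodComm (Fin r) (Fin r)).subtypeEquiv (by simp))
  have heq : Fintype.card {p : Fin r × Fin r // p.1 = p.2} = r := by
    rw [Fintype.card_congr (⟨fun p => p.1.1, fun i => ⟨(i, i), rfl⟩,
      fun p => Subtype.ext (Prod.ext rfl p.2), fun i => rfl⟩ :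
      {p : Fin r × Fin r // p.1 = p.2} ≃ Fin r)]
    simp
  have h1 : Fintype.card {p : Fin r × Fin r // p.1 < p.2}
      + Fintype.card {p : Fin r × Fin r // ¬ p.1 < p.2} = r ^ 2 := by
    rw [Fintype.card_subtype, Fintype.card_subtype, card_filter_add_card_filter_not]
    simp [sq]
  have h2 : Fintype.card {p : Fin r × Fin r // ¬ p.1 < p.2}
      = Fintype.card {p : Fin r × Fin r // p.2 < p.1} + Fintype.card {p : Fin r × Fin r // p.1 = p.2} := by
    rw [Fintype.card_congr ((Equiv.refl (Fin r × Fin r)).subtypeEquiv (p := fun p => ¬ p.1 < p.2)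
      (q := fun p => p.2 < p.1 ∨ p.1 = p.2) (fun p => by
        simp only [Equiv.refl_apply]
        constructor
        · intro h; rcases lt_trichotomy p.1 p.2 with h'|h'|h' <;> simp_all
        · rintro (h|h)
          · exact not_lt.mpr (le_of_lt h)
          · exact not_lt.mpr (le_of_eq h.symm)))]
    rw [Fintype.card_subtype_or_disjoint]
    intro q hq1 hq2 x hx
    have h1 : x.2 < x.1 := hq1 x hx
    have h2 : x.1 = x.2 := hq2 x hx
    exact absurd (h2 ▸ h1) (lt_irrefl _)
  omega

lemma count_split (r : ℕ) (μ : Fin r → ℝ) :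
    Fintype.card {p : Fin r × Fin r // p.1 < p.2 ∧ μ p.1 ≠ μ p.2}
      + Fintype.card {p : Fin r × Fin r // p.1 < p.2 ∧ μ p.1 = μ p.2}
      = Fintype.card {p : Fin r × Fin r // p.1 < p.2} := by
  classical
  rw [Fintype.card_subtype, Fintype.card_subtype, Fintype.card_subtype]
  rw [show (filter (fun p : Fin r × Fin r => p.1 < p.2 ∧ μ p.1 ≠ μ p.2) univ)
      = filter (fun p => ¬ μ p.1 = μ p.2) (filter (fun p : Fin r × Fin r => p.1 < p.2) univ) by
    rw [filter_filter]]
  rw [show (filter (fun p : Fin r × Fin r => p.1 < p.2 ∧ μ p.1 = μ p.2) univ)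
      = filter (fun p => μ p.1 = μ p.2) (filter (fun p : Fin r × Fin r => p.1 < p.2) univ) by
    rw [filter_filter]]
  rw [add_comm, card_filter_add_card_filter_not]

open Matrix Module

variable (r : ℕ) (μ : Fin r → ℝ)

noncomputable def Kd : Submodule ℝ (Matrix (Fin r) (Fin r) ℂ) where
  carrier := {W | (∀ i j, W j i = -(starRingEnd ℂ) (W i j)) ∧ ∀ i j, μ i ≠ μ j → W i j = 0}
  add_mem' := by
    rintro a b ⟨ha1, ha2⟩ ⟨hb1, hb2⟩
    refine ⟨fun i j => ?_, fun i j h => ?_⟩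
    · simp only [Matrix.add_apply, ha1 i j, hb1 i j, map_add, neg_add]
    · simp only [Matrix.add_apply, ha2 i j h, hb2 i j h, add_zero]
  zero_mem' := ⟨fun i j => by simp, fun i j h => rfl⟩
  smul_mem' := by
    rintro c a ⟨ha1, ha2⟩
    refine ⟨fun i j => ?_, fun i j h => ?_⟩
    · simp only [Matrix.smul_apply, ha1 i j, smul_neg, Complex.real_smul, _root_.map_mul,
        Complex.conj_ofReal]
    · simp only [Matrix.smul_apply, ha2 i j h, smul_zero]

noncomputable def coordMap : Matrix (Fin r) (Fin r) ℂ →ₗ[ℝ]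
    (Fin r → ℝ) × ({p : Fin r × Fin r // p.1 < p.2 ∧ μ p.1 = μ p.2} → ℂ) where
  toFun W := (fun i => (W i i).im, fun p => W p.1.1 p.1.2)
  map_add' a b := by
    ext x
    · simp [Matrix.add_apply]
    · simp [Matrix.add_apply]
  map_smul' c a := by
    ext x
    · simp [Matrix.smul_apply, Complex.real_smul]
    · simp [Matrix.smul_apply]

noncomputable def Wof (f : Fin r → ℝ)
    (g : {p : Fin r × Fin r // p.1 < p.2 ∧ μ p.1 = μ p.2} → ℂ) :
    Matrix (Fin r) (Fin r) ℂ := fun i j =>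
  if hij : i = j then (f i : ℂ) * Complex.I
  else if h2 : i < j then (if h3 : μ i = μ j then g ⟨(i, j), h2, h3⟩ else 0)
  else if h3 : μ j = μ i then
    -(starRingEnd ℂ) (g ⟨(j, i), (not_lt.mp h2).lt_of_ne (fun h => hij h.symm), h3⟩)
  else 0

lemma Wof_mem (f : Fin r → ℝ) (g) : Wof r μ f g ∈ Kd r μ := by
  constructor
  · intro i j
    unfold Wof
    rcases lt_trichotomy i j with h | h | h
    · rw [dif_neg h.ne', dif_neg (not_lt.mpr h.le), dif_neg h.ne, dif_pos h]
      by_cases h3 : μ i = μ j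
      · simp only [dif_pos h3]
      · simp only [dif_neg h3, map_zero, neg_zero]
    · subst h
      rw [dif_pos rfl]
      simp [Complex.ext_iff]
    · rw [dif_neg h.ne, dif_pos h, dif_neg h.ne', dif_neg (not_lt.mpr h.le)]
      by_cases h3 : μ j = μ i
      · simp only [dif_pos h3]
        simp
      · simp only [dif_neg h3, map_zero, neg_zero]
  · intro i j h
    unfold Wof
    rw [dif_neg (fun h' => h (congrArg μ h'))]
    by_cases h2 : i < j
    · rw [dif_pos h2, dif_neg h]
    · rw [dif_neg h2, dif_neg (fun h' => h h'.symm)]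

lemma finrank_Kd : finrank ℝ (Kd r μ)
    = r + 2 * Fintype.card {p : Fin r × Fin r // p.1 < p.2 ∧ μ p.1 = μ p.2} := by
  have hbij : Function.Bijective ((coordMap r μ).domRestrict (Kd r μ)) := by
    constructor
    · rw [← LinearMap.ker_eq_bot, LinearMap.ker_eq_bot']
      rintro ⟨W, hW1, hW2⟩ h
      have h1 := congrArg Prod.fst h
      have h2 := congrArg Prod.snd h
      simp only [LinearMap.domRestrict_apply, coordMap, LinearMap.coe_mk, AddHom.coe_mk,
        Prod.fst_zero, Prod.snd_zero] at h1 h2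
      refine Subtype.ext ?_
      simp only [ZeroMemClass.coe_zero]
      have key : ∀ i j : Fin r, i < j → W i j = 0 := by
        intro i j hij
        by_cases h3 : μ i = μ j
        · exact congrFun h2 ⟨(i, j), hij, h3⟩
        · exact hW2 i j h3
      ext i j
      rw [Matrix.zero_apply]
      rcases lt_trichotomy i j with h | h | h
      · exact key i j h
      · subst h
        have him : (W i i).im = 0 := congrFun h1 i
        have hre := hW1 i i
        rw [Complex.ext_iff] at hre
        simp only [Complex.neg_re, Complex.conj_re] at hre
        have : (W i i).re = 0 := by linarith [hre.1]
        simp [Complex.ext_iff, this, him]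
      · rw [hW1 j i, key j i h]
        simp
    · rintro ⟨f, g⟩
      refine ⟨⟨Wof r μ f g, Wof_mem r μ f g⟩, ?_⟩
      simp only [LinearMap.domRestrict_apply, coordMap, LinearMap.coe_mk, AddHom.coe_mk]
      refine Prod.ext (funext fun i => ?_) (funext fun p => ?_)
      · simp [Wof]
      · obtain ⟨⟨i, j⟩, hij, h3⟩ := p
        simp only [Wof]
        rw [dif_neg hij.ne, dif_pos hij, dif_pos h3]
  rw [LinearEquiv.finrank_eq (LinearEquiv.ofBijective _ hbij)]
  rw [Module.finrank_prod, Module.finrank_fintype_fun_eq_card, Fintype.card_fin]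
  rw [Module.finrank_pi_fintype, Complex.finrank_real_complex, Finset.sum_const,
    Finset.card_univ, smul_eq_mul, mul_comm]

lemma sandwich {r : ℕ} (A B X : Matrix (Fin r) (Fin r) ℂ) (hAB : A * B = 1) :
    A * (B * X * A) * B = X := by
  have : A * (B * X * A) * B = (A * B) * X * (A * B) := by simp only [Matrix.mul_assoc]
  rw [this, hAB, Matrix.one_mul, Matrix.mul_one]

lemma mapconj_mapconj {r : ℕ} (M : Matrix (Fin r) (Fin r) ℂ) :
    (M.map (starRingEnd ℂ)).map (starRingEnd ℂ) = M := by
  ext i j; simp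

lemma mapconj_add {r : ℕ} (a b : Matrix (Fin r) (Fin r) ℂ) :
    (a + b).map (starRingEnd ℂ) = a.map (starRingEnd ℂ) + b.map (starRingEnd ℂ) := by
  ext i j; simp

lemma mapconj_smul {r : ℕ} (c : ℝ) (a : Matrix (Fin r) (Fin r) ℂ) :
    (c • a).map (starRingEnd ℂ) = c • a.map (starRingEnd ℂ) := by
  ext i j; simp [Complex.real_smul, Matrix.smul_apply]

noncomputable def phi (r : ℕ) (U : Matrix (Fin r) (Fin r) ℂ)
    (hU : U ∈ Matrix.unitaryGroup (Fin r) ℂ) :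
    Matrix (Fin r) (Fin r) ℂ ≃ₗ[ℝ] Matrix (Fin r) (Fin r) ℂ where
  toFun B := star U * B.map (starRingEnd ℂ) * U
  invFun W := (U * W * star U).map (starRingEnd ℂ)
  map_add' a b := by rw [mapconj_add, Matrix.mul_add, Matrix.add_mul]
  map_smul' c a := by
    rw [mapconj_smul, RingHom.id_apply, Matrix.mul_smul, Matrix.smul_mul]
  left_inv a := by
    dsimp only; rw [sandwich U (star U) _ (Matrix.mem_unitaryGroup_iff.mp hU), mapconj_mapconj]
  right_inv W := by
    dsimp only; rw [mapconj_mapconj, sandwich (star U) U _ (Matrix.mem_unitaryGroup_iff'.mp hU)]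

lemma phi_apply {r : ℕ} (U : Matrix (Fin r) (Fin r) ℂ) (hU) (B : Matrix (Fin r) (Fin r) ℂ) :
    phi r U hU B = star U * B.map (starRingEnd ℂ) * U := rfl

noncomputable def K0 (r : ℕ) (H : Matrix (Fin r) (Fin r) ℂ) :
    Submodule ℝ (Matrix (Fin r) (Fin r) ℂ) where
  carrier := {B : Matrix (Fin r) (Fin r) ℂ |
        Bᵀ + B.map (starRingEnd ℂ) = 0 ∧
        Bᵀ * H + H * B.map (starRingEnd ℂ) = 0}
  add_mem' := by
    rintro a b ⟨ha1, ha2⟩ ⟨hb1, hb2⟩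
    constructor
    · rw [Matrix.transpose_add, mapconj_add,
        show aᵀ + bᵀ + (a.map (starRingEnd ℂ) + b.map (starRingEnd ℂ))
          = (aᵀ + a.map (starRingEnd ℂ)) + (bᵀ + b.map (starRingEnd ℂ)) by abel, ha1, hb1,
        add_zero]
    · rw [Matrix.transpose_add, mapconj_add, Matrix.add_mul, Matrix.mul_add,
        show aᵀ * H + bᵀ * H + (H * a.map (starRingEnd ℂ) + H * b.map (starRingEnd ℂ))
          = (aᵀ * H + H * a.map (starRingEnd ℂ)) + (bᵀ * H + H * b.map (starRingEnd ℂ)) by abel,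
        ha2, hb2, add_zero]
  zero_mem' := by
    constructor
    · ext i j; simp
    · ext i j; simp [Matrix.map_zero]
  smul_mem' := by
    rintro c a ⟨ha1, ha2⟩
    constructor
    · rw [Matrix.transpose_smul, mapconj_smul, ← smul_add, ha1, smul_zero]
    · rw [Matrix.transpose_smul, mapconj_smul, Matrix.smul_mul, Matrix.mul_smul, ← smul_add,
        ha2, smul_zero]


lemma mem_iff {r : ℕ} (H : Matrix (Fin r) (Fin r) ℂ) (μ : Fin r → ℝ)
    (U : Matrix (Fin r) (Fin r) ℂ) (hU : U ∈ Matrix.unitaryGroup (Fin r) ℂ)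
    (hdiag : H = U * Matrix.diagonal (fun i => (μ i : ℂ)) * star U)
    (B : Matrix (Fin r) (Fin r) ℂ) :
    (Bᵀ + B.map (starRingEnd ℂ) = 0 ∧
        Bᵀ * H + H * B.map (starRingEnd ℂ) = 0) ↔ phi r U hU B ∈ Kd r μ := by
  have hUU : star U * U = 1 := Matrix.mem_unitaryGroup_iff'.mp hU
  have hUU' : U * star U = 1 := Matrix.mem_unitaryGroup_iff.mp hU
  set d : Fin r → ℂ := fun i => (μ i : ℂ) with hd
  set V : Matrix (Fin r) (Fin r) ℂ := B.map (starRingEnd ℂ) with hV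
  set W : Matrix (Fin r) (Fin r) ℂ := star U * V * U with hW
  have hphi : phi r U hU B = W := rfl
  have hBt : Bᵀ = star V := by
    ext i j
    simp [hV, Matrix.star_apply, Matrix.map_apply, Matrix.transpose_apply]
  have hVW : V = U * W * star U := (sandwich U (star U) V hUU').symm
  have hskew_iff : star V = -V ↔ star W = -W := by
    constructor
    · intro h
      show star (star U * V * U) = -(star U * V * U)
      simp only [Matrix.star_mul, star_star, h, Matrix.neg_mul, Matrix.mul_neg,
        Matrix.mul_assoc]
    · intro h
      rw [hVW]
      simp only [Matrix.star_mul, star_star, h, Matrix.neg_mul, Matrix.mul_neg,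
        Matrix.mul_assoc]
  have hUH : star U * H = Matrix.diagonal d * star U := by
    rw [hdiag, ← Matrix.mul_assoc, ← Matrix.mul_assoc, hUU, Matrix.one_mul]
  have hHU : U * Matrix.diagonal d = H * U := by
    rw [hdiag]
    calc U * Matrix.diagonal d
        = U * Matrix.diagonal d * (star U * U) := by rw [hUU, Matrix.mul_one]
      _ = U * Matrix.diagonal d * star U * U := by simp only [Matrix.mul_assoc]
  have eq1 : Matrix.diagonal d * W = star U * (H * V) * U := by
    calc Matrix.diagonal d * W = (Matrix.diagonal d * star U) * (V * U) := by
          simp only [hW, Matrix.mul_assoc]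
      _ = (star U * H) * (V * U) := by rw [hUH]
      _ = star U * (H * V) * U := by simp only [Matrix.mul_assoc]
  have eq2 : W * Matrix.diagonal d = star U * (V * H) * U := by
    calc W * Matrix.diagonal d = (star U * V) * (U * Matrix.diagonal d) := by
          simp only [hW, Matrix.mul_assoc]
      _ = (star U * V) * (H * U) := by rw [hHU]
      _ = star U * (V * H) * U := by simp only [Matrix.mul_assoc]
  have conj_inj : ∀ X Y : Matrix (Fin r) (Fin r) ℂ,
      star U * X * U = star U * Y * U → X = Y := by
    intro X Y h
    have h2 := congrArg (fun Z => U * Z * star U) h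
    simpa only [sandwich U (star U) _ hUU'] using h2
  have hcomm_iff : H * V = V * H ↔
      Matrix.diagonal d * W = W * Matrix.diagonal d := by
    rw [eq1, eq2]
    exact ⟨fun h => by rw [h], conj_inj _ _⟩
  have hdiag_iff : Matrix.diagonal d * W = W * Matrix.diagonal d ↔
      ∀ i j, μ i ≠ μ j → W i j = 0 := by
    rw [← Matrix.ext_iff]
    constructor
    · intro h i j hne
      have h' := h i j
      rw [Matrix.diagonal_mul, Matrix.mul_diagonal] at h'
      have hdne : d i - d j ≠ 0 := by
        rw [hd]
        simpa [sub_eq_zero] using fun hc => hne (Complex.ofReal_inj.mp hc)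
      have hz : (d i - d j) * W i j = 0 := by
        rw [sub_mul, h', mul_comm]
        ring
      rcases mul_eq_zero.mp hz with h0 | h0
      · exact absurd h0 hdne
      · exact h0
    · intro h i j
      rw [Matrix.diagonal_mul, Matrix.mul_diagonal]
      by_cases he : μ i = μ j
      · rw [hd]
        simp only [he]
        rw [mul_comm]
      · rw [h i j he, mul_zero, zero_mul]
  have hskew_entries : star W = -W ↔ ∀ i j, W j i = -(starRingEnd ℂ) (W i j) := by
    constructor
    · intro h i j
      have h' := congrFun (congrFun h i) j
      rw [Matrix.star_apply, Matrix.neg_apply] at h'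
      have : W j i = star (star (W j i)) := (star_star _).symm
      rw [this, h', star_neg, starRingEnd_apply]
    · intro h
      ext i j
      rw [Matrix.star_apply, Matrix.neg_apply, h i j, star_neg, starRingEnd_apply, star_star]
  rw [hphi]
  show _ ↔ (∀ i j, W j i = -(starRingEnd ℂ) (W i j)) ∧ ∀ i j, μ i ≠ μ j → W i j = 0
  rw [← hskew_entries, ← hdiag_iff, ← hcomm_iff, hBt, ← hskew_iff]
  constructor
  · rintro ⟨c1, c2⟩
    have hsk : star V = -V := by
      rw [eq_neg_iff_add_eq_zero]
      exact c1
    refine ⟨hsk, ?_⟩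
    rw [hsk, Matrix.neg_mul, neg_add_eq_zero] at c2
    exact c2.symm
  · rintro ⟨k1, k2⟩
    refine ⟨by rw [k1]; exact neg_add_cancel V, ?_⟩
    rw [k1, Matrix.neg_mul, neg_add_eq_zero]
    exact k2.symm

/-- If `H` is an `r × r` Hermitian matrix with eigenvalues `μ₁, …, μ_r`
(i.e. `H = U * diagonal μ * U⁻¹` for a unitary `U`), then the real vector space
`K = {B : Bᵀ + conj B = 0, Bᵀ H + H conj B = 0}` has dimension `r² - 2p`,
where `p` is the number of pairs `i < j` with `μ i ≠ μ j`. -/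
theorem stmt_4 (r : ℕ) (H : Matrix (Fin r) (Fin r) ℂ) (hH : H.IsHermitian)
    (μ : Fin r → ℝ) (U : Matrix (Fin r) (Fin r) ℂ)
    (hU : U ∈ Matrix.unitaryGroup (Fin r) ℂ)
    (hdiag : H = U * Matrix.diagonal (fun i => (μ i : ℂ)) * star U) :
    Module.finrank ℝ (Submodule.span ℝ
      {B : Matrix (Fin r) (Fin r) ℂ |
        Bᵀ + B.map (starRingEnd ℂ) = 0 ∧
        Bᵀ * H + H * B.map (starRingEnd ℂ) = 0})
      = r ^ 2 - 2 * Nat.card {p : Fin r × Fin r // p.1 < p.2 ∧ μ p.1 ≠ μ p.2} := by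
  classical
  have hspan : Submodule.span ℝ
      {B : Matrix (Fin r) (Fin r) ℂ |
        Bᵀ + B.map (starRingEnd ℂ) = 0 ∧
        Bᵀ * H + H * B.map (starRingEnd ℂ) = 0} = K0 r H :=
    Submodule.span_eq (K0 r H)
  rw [hspan]
  have hmap : Submodule.map ((phi r U hU : Matrix (Fin r) (Fin r) ℂ →ₗ[ℝ]
      Matrix (Fin r) (Fin r) ℂ)) (K0 r H) = Kd r μ := by
    ext W
    simp only [Submodule.mem_map, LinearEquiv.coe_coe]
    constructor
    · rintro ⟨B, hB, rfl⟩
      exact (mem_iff H μ U hU hdiag B).mp hB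
    · intro hW
      refine ⟨(phi r U hU).symm W, ?_, LinearEquiv.apply_symm_apply _ _⟩
      apply (mem_iff H μ U hU hdiag _).mpr
      rw [LinearEquiv.apply_symm_apply]
      exact hW
  rw [LinearEquiv.finrank_eq ((phi r U hU).ofSubmodules _ _ hmap), finrank_Kd,
    Nat.card_eq_fintype_card]
  have c1 := count_lt r
  have c2 := count_split r μ
  omega
end

section
/- Let G be the set of A ∈ GL₂(ℝ) with AΩ₁ = Ω₁, where Ω₁ = {x ∈ ℝ² : x₁ > 0, x₂ > 0}, such that there exists B ∈ GL_m(ℂ) with A·(‖w‖², ‖w‖²) = (‖Bw‖², ‖Bw‖²) for all w ∈ ℂ^m (i.e., A₁₁‖w‖² + A₁₂‖w‖² = ‖Bw‖² and A₂₁‖w‖² + A₂₂‖w‖² = ‖Bw‖² for all w). Then the identity component of G is {a·I₂ : a > 0}, and in particular G does not act transitively on Ω₁. -/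
open Matrix

private lemma aux_nonneg {a b : ℝ} (h : ∀ ε : ℝ, 0 < ε → 0 < a + b * ε) : 0 ≤ a := by
  by_contra hc
  push_neg at hc
  set M := |b| + 1 with hM
  have hM0 : 0 < M := by positivity
  have hε : 0 < -a / (2 * M) := div_pos (by linarith) (by linarith)
  have h1 := h _ hε
  have h2 : b * (-a / (2 * M)) ≤ M * (-a / (2 * M)) :=
    mul_le_mul_of_nonneg_right (by have := le_abs_self b; linarith) hε.le
  have h3 : M * (-a / (2 * M)) = -a / 2 := by field_simp
  rw [h3] at h2
  linarith

private lemma entries_nonneg (A : Matrix (Fin 2) (Fin 2) ℝ)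
    (himg : A.mulVec '' {x : Fin 2 → ℝ | 0 < x 0 ∧ 0 < x 1} = {x | 0 < x 0 ∧ 0 < x 1}) :
    ∀ i j, 0 ≤ A i j := by
  have hmem : ∀ x : Fin 2 → ℝ, (0 < x 0 ∧ 0 < x 1) → ∀ i, 0 < (A.mulVec x) i := by
    intro x hx i
    have : A.mulVec x ∈ {x : Fin 2 → ℝ | 0 < x 0 ∧ 0 < x 1} := by
      rw [← himg]; exact ⟨x, hx, rfl⟩
    fin_cases i
    · exact this.1
    · exact this.2
  have hcol0 : ∀ i, 0 ≤ A i 0 := by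
    intro i
    apply aux_nonneg (b := A i 1)
    intro ε hε
    have := hmem (fun k => if k = 0 then 1 else ε) (by simp [hε]) i
    simpa [Matrix.mulVec, dotProduct, Fin.sum_univ_two] using this
  have hcol1 : ∀ i, 0 ≤ A i 1 := by
    intro i
    apply aux_nonneg (b := A i 0)
    intro ε hε
    have := hmem (fun k => if k = 0 then ε else 1) (by simp [hε]) i
    have h' : 0 < A i 0 * ε + A i 1 := by
      simpa [Matrix.mulVec, dotProduct, Fin.sum_univ_two] using this
    linarith [h']
  intro i j
  fin_cases j
  · exact hcol0 i
  · exact hcol1 i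

private lemma rowsum {m : ℕ} (hm : 1 ≤ m) (A : Matrix (Fin 2) (Fin 2) ℝ)
    (B : Matrix (Fin m) (Fin m) ℂ) (hB : IsUnit B)
    (hw : ∀ w : Fin m → ℂ,
      A.mulVec (fun _ => ∑ j, ‖w j‖ ^ 2) = fun _ => ∑ j, ‖B.mulVec w j‖ ^ 2) :
    0 < A 0 0 + A 0 1 ∧ A 1 0 + A 1 1 = A 0 0 + A 0 1 := by
  have hm' : (0 : ℝ) < m := by exact_mod_cast hm
  set w : Fin m → ℂ := fun _ => 1 with hwdef
  have hsum : (∑ j, ‖w j‖ ^ 2) = (m : ℝ) := by simp [hwdef]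
  have h := hw w
  have hL : ∀ i, A.mulVec (fun _ => ∑ j, ‖w j‖ ^ 2) i = (A i 0 + A i 1) * m := by
    intro i
    simp only [hsum]
    simp [Matrix.mulVec, dotProduct, Fin.sum_univ_two]
    ring
  set c := ∑ j, ‖B.mulVec w j‖ ^ 2 with hcdef
  have h0 : (A 0 0 + A 0 1) * m = c := by rw [← hL 0, h]
  have h1 : (A 1 0 + A 1 1) * m = c := by rw [← hL 1, h]
  have hBw : B.mulVec w ≠ 0 := by
    intro h0'
    have hBd : IsUnit B.det := (Matrix.isUnit_iff_isUnit_det B).mp hB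
    have hw0 : w = 0 := by
      have := congrArg (fun v => B⁻¹.mulVec v) h0'
      simpa [Matrix.mulVec_mulVec, Matrix.nonsing_inv_mul B hBd] using this
    have : (1 : ℂ) = 0 := by
      have := congrFun hw0 ⟨0, hm⟩
      simpa [hwdef] using this
    exact one_ne_zero this
  obtain ⟨j, hj⟩ : ∃ j, B.mulVec w j ≠ 0 := by
    by_contra hno; push_neg at hno; exact hBw (funext hno)
  have hc : 0 < c := by
    refine Finset.sum_pos' (fun j _ => by positivity) ⟨j, Finset.mem_univ j, ?_⟩
    exact pow_pos (norm_pos_iff.mpr hj) 2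
  constructor
  · nlinarith [h0]
  · have : (A 1 0 + A 1 1) * m = (A 0 0 + A 0 1) * m := by rw [h0, h1]
    exact mul_right_cancel₀ (ne_of_gt hm') this

private lemma classify (A : Matrix (Fin 2) (Fin 2) ℝ) (hd : 0 < A.det)
    (himg : A.mulVec '' {x : Fin 2 → ℝ | 0 < x 0 ∧ 0 < x 1} = {x | 0 < x 0 ∧ 0 < x 1})
    (hr : A 1 0 + A 1 1 = A 0 0 + A 0 1) :
    ∃ a : ℝ, 0 < a ∧ A = a • (1 : Matrix (Fin 2) (Fin 2) ℝ) := by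
  have hnn := entries_nonneg A himg
  have hdet : IsUnit A.det := isUnit_iff_ne_zero.mpr hd.ne'
  have hinv : A⁻¹.mulVec '' {x : Fin 2 → ℝ | 0 < x 0 ∧ 0 < x 1} = {x | 0 < x 0 ∧ 0 < x 1} := by
    conv_lhs => rw [← himg]
    rw [Set.image_image]
    have hxx : ∀ x : Fin 2 → ℝ, A⁻¹.mulVec (A.mulVec x) = x := by
      intro x
      rw [Matrix.mulVec_mulVec, Matrix.nonsing_inv_mul A hdet, Matrix.one_mulVec]
    simp only [hxx, Set.image_id']
  have hnn' := entries_nonneg A⁻¹ hinv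
  have h01 : A 0 1 = 0 := by
    have h := hnn' 0 1
    rw [Matrix.inv_def, Matrix.adjugate_fin_two] at h
    simp [Ring.inverse_eq_inv'] at h
    have hpos : 0 < (A.det)⁻¹ := inv_pos.mpr hd
    nlinarith [hnn 0 1, h]
  have h10 : A 1 0 = 0 := by
    have h := hnn' 1 0
    rw [Matrix.inv_def, Matrix.adjugate_fin_two] at h
    simp [Ring.inverse_eq_inv'] at h
    have hpos : 0 < (A.det)⁻¹ := inv_pos.mpr hd
    nlinarith [hnn 1 0, h]
  have hdet2 : A.det = A 0 0 * A 1 1 := by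
    rw [Matrix.det_fin_two, h01]; ring
  have ha : 0 < A 0 0 := by nlinarith [hnn 0 0, hnn 1 1, hdet2 ▸ hd]
  have heq : A 1 1 = A 0 0 := by rw [h01, h10] at hr; linarith
  refine ⟨A 0 0, ha, ?_⟩
  ext i j
  fin_cases i <;> fin_cases j <;>
    simp [Matrix.smul_apply, Matrix.one_apply, h01, h10, heq]

private lemma scalar_mem {m : ℕ} (a : ℝ) (ha : 0 < a) :
    IsUnit (a • (1 : Matrix (Fin 2) (Fin 2) ℝ)) ∧
    (a • (1 : Matrix (Fin 2) (Fin 2) ℝ)).mulVec '' {x : Fin 2 → ℝ | 0 < x 0 ∧ 0 < x 1}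
      = {x | 0 < x 0 ∧ 0 < x 1} ∧
    ∃ B : Matrix (Fin m) (Fin m) ℂ, IsUnit B ∧ ∀ w : Fin m → ℂ,
      (a • (1 : Matrix (Fin 2) (Fin 2) ℝ)).mulVec (fun _ => ∑ j, ‖w j‖ ^ 2)
        = fun _ => ∑ j, ‖B.mulVec w j‖ ^ 2 := by
  have hmv : ∀ x : Fin 2 → ℝ, (a • (1 : Matrix (Fin 2) (Fin 2) ℝ)).mulVec x = a • x := by
    intro x; rw [Matrix.smul_mulVec, Matrix.one_mulVec]
  refine ⟨?_, ?_, ?_⟩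
  · rw [Matrix.isUnit_iff_isUnit_det]
    have hd : (a • (1 : Matrix (Fin 2) (Fin 2) ℝ)).det = a ^ 2 := by
      rw [Matrix.det_smul]; simp
    rw [hd]
    exact isUnit_iff_ne_zero.mpr (pow_ne_zero 2 ha.ne')
  · ext y
    constructor
    · rintro ⟨x, ⟨hx0, hx1⟩, rfl⟩
      rw [hmv]
      exact ⟨mul_pos ha hx0, mul_pos ha hx1⟩
    · rintro ⟨hy0, hy1⟩
      refine ⟨a⁻¹ • y, ⟨mul_pos (inv_pos.mpr ha) hy0, mul_pos (inv_pos.mpr ha) hy1⟩, ?_⟩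
      rw [hmv]
      exact smul_inv_smul₀ ha.ne' y
  · refine ⟨(Real.sqrt a : ℂ) • (1 : Matrix (Fin m) (Fin m) ℂ), ?_, ?_⟩
    · rw [Matrix.isUnit_iff_isUnit_det]
      have hd : ((Real.sqrt a : ℂ) • (1 : Matrix (Fin m) (Fin m) ℂ)).det
          = (Real.sqrt a : ℂ) ^ m := by
        rw [Matrix.det_smul]; simp
      rw [hd]
      exact isUnit_iff_ne_zero.mpr
        (pow_ne_zero m (Complex.ofReal_ne_zero.mpr (Real.sqrt_pos.mpr ha).ne'))
    · intro w
      funext i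
      rw [hmv]
      have hterm : ∀ j, ‖(((Real.sqrt a : ℂ) • (1 : Matrix (Fin m) (Fin m) ℂ)).mulVec w) j‖ ^ 2
          = a * ‖w j‖ ^ 2 := by
        intro j
        rw [Matrix.smul_mulVec, Matrix.one_mulVec]
        simp only [Pi.smul_apply, smul_eq_mul, norm_mul, Complex.norm_real,
          Real.norm_eq_abs]
        rw [mul_pow, abs_of_nonneg (Real.sqrt_nonneg a), Real.sq_sqrt ha.le]
      simp only [hterm, Pi.smul_apply, smul_eq_mul, ← Finset.mul_sum]

/-- For `Ω₁` the open first quadrant and `H(w,w) = (‖w‖², ‖w‖²)` on `ℂᵐ`, the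
identity component of `G(Ω₁, H)` consists of the positive scalar matrices, and
in particular `G(Ω₁, H)` does not act transitively on `Ω₁`. -/
theorem stmt_11 (m : ℕ) (hm : 1 ≤ m)
    (Ω₁ : Set (Fin 2 → ℝ)) (hΩ₁ : Ω₁ = {x | 0 < x 0 ∧ 0 < x 1})
    (G : Set (Matrix (Fin 2) (Fin 2) ℝ))
    (hG : G = {A | IsUnit A ∧ A.mulVec '' Ω₁ = Ω₁ ∧
      ∃ B : Matrix (Fin m) (Fin m) ℂ, IsUnit B ∧ ∀ w : Fin m → ℂ,
        A.mulVec (fun _ => ∑ j, ‖w j‖ ^ 2) = fun _ => ∑ j, ‖B.mulVec w j‖ ^ 2}) :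
    connectedComponentIn G 1 =
      {A | ∃ a : ℝ, 0 < a ∧ A = a • (1 : Matrix (Fin 2) (Fin 2) ℝ)} ∧
    ¬ ∀ x ∈ Ω₁, ∀ y ∈ Ω₁, ∃ A ∈ G, A.mulVec x = y := by
  subst hΩ₁ hG
  set GG : Set (Matrix (Fin 2) (Fin 2) ℝ) := {A : Matrix (Fin 2) (Fin 2) ℝ |
      IsUnit A ∧ A.mulVec '' {x : Fin 2 → ℝ | 0 < x 0 ∧ 0 < x 1} = {x | 0 < x 0 ∧ 0 < x 1} ∧
      ∃ B : Matrix (Fin m) (Fin m) ℂ, IsUnit B ∧ ∀ w : Fin m → ℂ,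
        A.mulVec (fun _ => ∑ j, ‖w j‖ ^ 2) = fun _ => ∑ j, ‖B.mulVec w j‖ ^ 2}
      with hGG
  have hone : (1 : Matrix (Fin 2) (Fin 2) ℝ) ∈ GG := by
    have h := scalar_mem (m := m) 1 one_pos
    rw [hGG]
    rw [one_smul] at h; exact h
  constructor
  · apply subset_antisymm
    · intro A hA
      have hAG := connectedComponentIn_subset _ _ hA
      obtain ⟨hU, himg, B, hB, hw⟩ := hAG
      obtain ⟨hc, hr⟩ := rowsum hm A B hB hw
      have hdetcont : Continuous fun M : Matrix (Fin 2) (Fin 2) ℝ => M.det :=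
        Continuous.matrix_det continuous_id
      have hdet0 : 0 < A.det := by
        have hcover : connectedComponentIn GG 1 ⊆
            {M : Matrix (Fin 2) (Fin 2) ℝ | 0 < M.det} ∪ {M | M.det < 0} := by
          intro M hM
          have hMG := connectedComponentIn_subset _ _ hM
          have hne : M.det ≠ 0 := by
            have := (Matrix.isUnit_iff_isUnit_det M).mp hMG.1
            exact this.ne_zero
          rcases lt_or_gt_of_ne hne with h | h
          · exact Or.inr h
          · exact Or.inl h
        have hopen1 : IsOpen {M : Matrix (Fin 2) (Fin 2) ℝ | 0 < M.det} :=
          isOpen_lt continuous_const hdetcont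
        have hopen2 : IsOpen {M : Matrix (Fin 2) (Fin 2) ℝ | M.det < 0} :=
          isOpen_lt hdetcont continuous_const
        have hdisj : Disjoint {M : Matrix (Fin 2) (Fin 2) ℝ | 0 < M.det} {M | M.det < 0} := by
          rw [Set.disjoint_left]
          intro M h1 h2
          simp only [Set.mem_setOf_eq] at h1 h2
          linarith
        rcases IsPreconnected.subset_or_subset hopen1 hopen2 hdisj hcover
            isPreconnected_connectedComponentIn with hsub | hsub
        · exact hsub hA
        · have h1mem := mem_connectedComponentIn hone
          have := hsub h1mem
          rw [Set.mem_setOf_eq, Matrix.det_one] at this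
          linarith
      exact classify A hdet0 himg hr
    · rintro A ⟨a, ha, rfl⟩
      set S := (fun t : ℝ => t • (1 : Matrix (Fin 2) (Fin 2) ℝ)) '' Set.Ioi 0 with hSdef
      have hcont : Continuous fun t : ℝ => t • (1 : Matrix (Fin 2) (Fin 2) ℝ) :=
        continuous_id.smul continuous_const
      have hS : IsPreconnected S :=
        (isPreconnected_Ioi).image _ hcont.continuousOn
      have hSG : S ⊆ GG := by
        rintro _ ⟨t, ht, rfl⟩
        rw [hGG]
        exact scalar_mem (m := m) t ht
      have h1S : (1 : Matrix (Fin 2) (Fin 2) ℝ) ∈ S :=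
        ⟨1, Set.mem_Ioi.mpr one_pos, one_smul _ _⟩
      exact hS.subset_connectedComponentIn h1S hSG ⟨a, ha, rfl⟩
  · intro htr
    obtain ⟨A, hA, hEq⟩ := htr (fun _ => 1) ⟨one_pos, one_pos⟩ ![1, 2] ⟨by norm_num, by norm_num⟩
    obtain ⟨hU, himg, B, hB, hw⟩ := hA
    obtain ⟨hc, hr⟩ := rowsum hm A B hB hw
    have e0 := congrFun hEq 0
    have e1 := congrFun hEq 1
    simp [Matrix.mulVec, dotProduct, Fin.sum_univ_two] at e0 e1
    linarith
end

section
/- Let N ≥ 1 and let H̃ : ℂ^N × ℂ^N → ℂ³ be given by H̃(w, w') = (Σⱼ conj(wⱼ)w'ⱼ, Σⱼ conj(wⱼ)w'ⱼ, 0). Suppose Φ : ℂ³ → ℂ^N is a ℂ-linear map given by a matrix (φⁱⱼ) such that for every w ∈ ℂ^N the real-linear map x ↦ Im H̃(w, Φ(x)) on ℝ³ belongs to 𝔤(Ω₃) = {((λ,p,q),(p,λ,r),(q,−r,λ)) : λ,p,q,r ∈ ℝ}. Then Φ = 0. -/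
open Matrix

/-- Let `H̃(w,w') = (∑ conj(wⱼ)w'ⱼ, ∑ conj(wⱼ)w'ⱼ, 0)` on `ℂᴺ`. If a `ℂ`-linear
map `Φ : ℂ³ → ℂᴺ` (with matrix `φ`) is such that for every `w` the real matrix
of `x ↦ Im H̃(w, Φ(x))` lies in `𝔤(Ω₃)`, then `Φ = 0`. -/
theorem stmt_13 (N : ℕ) (hN : 1 ≤ N) (φ : Fin N → Fin 3 → ℂ)
    (h : ∀ w : Fin N → ℂ, ∃ l p q r : ℝ,
      (Matrix.of fun (i x : Fin 3) =>
          if i = 2 then (0 : ℝ)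
          else (∑ j, (starRingEnd ℂ) (w j) * φ j x).im)
        = !![l, p, q; p, l, r; q, -r, l]) :
    φ = 0 := by
  have key : ∀ (w : Fin N → ℂ) (x : Fin 3),
      (∑ j, (starRingEnd ℂ) (w j) * φ j x).im = 0 := by
    intro w x
    obtain ⟨l, p, q, r, hm⟩ := h w
    have e : ∀ i y : Fin 3,
        (if i = 2 then (0 : ℝ)
          else (∑ j, (starRingEnd ℂ) (w j) * φ j y).im)
        = !![l, p, q; p, l, r; q, -r, l] i y := by
      intro i y
      have := congrFun (congrFun hm i) y
      simpa using this
    have e22 : (0 : ℝ) = l := by simpa using e 2 2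
    have e20 : (0 : ℝ) = q := by simpa using e 2 0
    have e00 : (∑ j, (starRingEnd ℂ) (w j) * φ j 0).im = l := by simpa using e 0 0
    have e10 : (∑ j, (starRingEnd ℂ) (w j) * φ j 0).im = p := by simpa using e 1 0
    have e01 : (∑ j, (starRingEnd ℂ) (w j) * φ j 1).im = p := by simpa using e 0 1
    have e02 : (∑ j, (starRingEnd ℂ) (w j) * φ j 2).im = q := by simpa using e 0 2
    fin_cases x
    · exact e00.trans e22.symm
    · exact e01.trans (e10.symm.trans (e00.trans e22.symm))
    · exact e02.trans e20.symm
  funext j x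
  have h1 := key (Pi.single j (1 : ℂ)) x
  have h2 := key (Pi.single j Complex.I) x
  have hs : ∀ c : ℂ, (∑ j', (starRingEnd ℂ) ((Pi.single j c : Fin N → ℂ) j') * φ j' x)
      = (starRingEnd ℂ) c * φ j x := by
    intro c
    rw [Finset.sum_eq_single j]
    · simp
    · intro b _ hb; simp [Pi.single_apply, hb]
    · intro hj; simp at hj
  rw [hs] at h1 h2
  simp only [RingHom.map_one, one_mul] at h1
  have h2' : (φ j x).re = 0 := by
    simpa [Complex.mul_im] using h2
  have : φ j x = 0 := Complex.ext h2' h1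
  simpa using this
end

section
/- Let a : ℝ³ × ℝ³ → ℝ³ be a symmetric bilinear form with components a(x,x)ₗ = Σᵢⱼ aᵢⱼˡ xᵢxⱼ (aᵢⱼˡ = aⱼᵢˡ ∈ ℝ). Suppose that (1) for every fixed vector y ∈ ℝ³, the linear map x ↦ a(y,x) belongs to 𝔤(Ω₃) = {((λ,p,q),(p,λ,r),(q,−r,λ))}, and (2) the relations a₁₂ˡ = −a₁₁ˡ, a₂₂ˡ = −a₁₂ˡ, a₂₃ˡ = −a₁₃ˡ hold for l = 1,2,3. Then a(x,x) = c·((x₁−x₂)² + x₃², −(x₁−x₂)² + x₃², 2(x₁−x₂)x₃) for some constant c ∈ ℝ. In particular the space of such forms is 1-dimensional. -/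
open Matrix

/-- A symmetric bilinear form `a : ℝ³ × ℝ³ → ℝ³` such that every `a(y, ·)` lies
in `𝔤(Ω₃)` and which satisfies the relations `a₁₂ˡ = -a₁₁ˡ`, `a₂₂ˡ = -a₁₂ˡ`,
`a₂₃ˡ = -a₁₃ˡ` is a scalar multiple of
`((x₁-x₂)² + x₃², -(x₁-x₂)² + x₃², 2(x₁-x₂)x₃)`. -/
theorem stmt_14 (a : Fin 3 → Fin 3 → Fin 3 → ℝ)
    (hsymm : ∀ i j l, a i j l = a j i l)
    (h1 : ∀ y : Fin 3 → ℝ, ∃ lam p q r : ℝ,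
      (Matrix.of fun (l j : Fin 3) => ∑ i, a i j l * y i)
        = !![lam, p, q; p, lam, r; q, -r, lam])
    (h2 : ∀ l, a 0 1 l = -(a 0 0 l) ∧ a 1 1 l = -(a 0 1 l) ∧ a 1 2 l = -(a 0 2 l)) :
    ∃ c : ℝ, ∀ x : Fin 3 → ℝ,
      (fun l => ∑ i, ∑ j, a i j l * x i * x j) =
        ![c * ((x 0 - x 1) ^ 2 + (x 2) ^ 2),
          c * (-(x 0 - x 1) ^ 2 + (x 2) ^ 2),
          c * (2 * (x 0 - x 1) * x 2)] := by
  have s10 : ∀ l, a 1 0 l = a 0 1 l := fun l => hsymm 1 0 l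
  have s20 : ∀ l, a 2 0 l = a 0 2 l := fun l => hsymm 2 0 l
  have s21 : ∀ l, a 2 1 l = a 1 2 l := fun l => hsymm 2 1 l
  obtain ⟨la, pa, qa, ra, hA⟩ := h1 ![1, 0, 0]
  obtain ⟨lb, pb, qb, rb, hB⟩ := h1 ![0, 1, 0]
  obtain ⟨lc, pc, qc, rc, hC⟩ := h1 ![0, 0, 1]
  have HA : ∀ l j : Fin 3, a 0 j l = !![la, pa, qa; pa, la, ra; qa, -ra, la] l j := by
    intro l j
    have h := congrFun (congrFun hA l) j
    simpa [Fin.sum_univ_three] using h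
  have HB : ∀ l j : Fin 3, a 1 j l = !![lb, pb, qb; pb, lb, rb; qb, -rb, lb] l j := by
    intro l j
    have h := congrFun (congrFun hB l) j
    simpa [Fin.sum_univ_three] using h
  have HC : ∀ l j : Fin 3, a 2 j l = !![lc, pc, qc; pc, lc, rc; qc, -rc, lc] l j := by
    intro l j
    have h := congrFun (congrFun hC l) j
    simpa [Fin.sum_univ_three] using h
  -- relations for i = 0
  have A1 : a 0 0 0 = a 0 1 1 := by have u := HA 0 0; have v := HA 1 1; simp at u v; linarith
  have A2 : a 0 1 1 = a 0 2 2 := by have u := HA 1 1; have v := HA 2 2; simp at u v; linarith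
  have A3 : a 0 1 0 = a 0 0 1 := by have u := HA 0 1; have v := HA 1 0; simp at u v; linarith
  have A4 : a 0 2 0 = a 0 0 2 := by have u := HA 0 2; have v := HA 2 0; simp at u v; linarith
  have A5 : a 0 2 1 = -(a 0 1 2) := by have u := HA 1 2; have v := HA 2 1; simp at u v; linarith
  -- relations for i = 1
  have B1 : a 1 0 0 = a 1 1 1 := by have u := HB 0 0; have v := HB 1 1; simp at u v; linarith
  have B2 : a 1 1 1 = a 1 2 2 := by have u := HB 1 1; have v := HB 2 2; simp at u v; linarith
  have B3 : a 1 1 0 = a 1 0 1 := by have u := HB 0 1; have v := HB 1 0; simp at u v; linarith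
  have B4 : a 1 2 0 = a 1 0 2 := by have u := HB 0 2; have v := HB 2 0; simp at u v; linarith
  have B5 : a 1 2 1 = -(a 1 1 2) := by have u := HB 1 2; have v := HB 2 1; simp at u v; linarith
  -- relations for i = 2
  have C1 : a 2 0 0 = a 2 1 1 := by have u := HC 0 0; have v := HC 1 1; simp at u v; linarith
  have C2 : a 2 1 1 = a 2 2 2 := by have u := HC 1 1; have v := HC 2 2; simp at u v; linarith
  have C3 : a 2 1 0 = a 2 0 1 := by have u := HC 0 1; have v := HC 1 0; simp at u v; linarith
  have C4 : a 2 2 0 = a 2 0 2 := by have u := HC 0 2; have v := HC 2 0; simp at u v; linarith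
  have C5 : a 2 2 1 = -(a 2 1 2) := by have u := HC 1 2; have v := HC 2 1; simp at u v; linarith
  simp only [s10, s20, s21] at B1 B2 B3 B4 B5 C1 C2 C3 C4 C5
  obtain ⟨D1, D2, D3⟩ := h2 0
  obtain ⟨E1, E2, E3⟩ := h2 1
  obtain ⟨F1, F2, F3⟩ := h2 2
  -- all entries in terms of c := a 0 0 0
  have v001 : a 0 0 1 = -(a 0 0 0) := by linarith
  have v002 : a 0 0 2 = 0 := by linarith
  have v010 : a 0 1 0 = -(a 0 0 0) := by linarith
  have v011 : a 0 1 1 = a 0 0 0 := by linarith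
  have v012 : a 0 1 2 = 0 := by linarith
  have v020 : a 0 2 0 = 0 := by linarith
  have v021 : a 0 2 1 = 0 := by linarith
  have v022 : a 0 2 2 = a 0 0 0 := by linarith
  have v110 : a 1 1 0 = a 0 0 0 := by linarith
  have v111 : a 1 1 1 = -(a 0 0 0) := by linarith
  have v112 : a 1 1 2 = 0 := by linarith
  have v120 : a 1 2 0 = 0 := by linarith
  have v121 : a 1 2 1 = 0 := by linarith
  have v122 : a 1 2 2 = -(a 0 0 0) := by linarith
  have v220 : a 2 2 0 = a 0 0 0 := by linarith
  have v221 : a 2 2 1 = a 0 0 0 := by linarith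
  have v222 : a 2 2 2 = 0 := by linarith
  refine ⟨a 0 0 0, fun x => ?_⟩
  funext l
  fin_cases l
  · show (∑ i, ∑ j, a i j 0 * x i * x j) = a 0 0 0 * ((x 0 - x 1) ^ 2 + x 2 ^ 2)
    simp only [Fin.sum_univ_three, s10, s20, s21, v010, v020, v110, v120, v220]
    ring
  · show (∑ i, ∑ j, a i j 1 * x i * x j) = a 0 0 0 * (-(x 0 - x 1) ^ 2 + x 2 ^ 2)
    simp only [Fin.sum_univ_three, s10, s20, s21, v001, v011, v021, v111, v121, v221]
    ring
  · show (∑ i, ∑ j, a i j 2 * x i * x j) = a 0 0 0 * (2 * (x 0 - x 1) * x 2)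
    simp only [Fin.sum_univ_three, s10, s20, s21, v002, v012, v022, v112, v122, v222]
    ring
end

section
/- Let v = (1,1,0) and define H(w,w') = v·(conj(w₁)w'₁ + conj(w₂)w'₂) giving the Hermitian form H(w,w) = (|w₁|²+|w₂|², |w₁|²+|w₂|², 0) on ℂ². The subgroup G(Ω₃, H) = {A ∈ GL₃(ℝ) : AΩ₃ = Ω₃ and ∃B ∈ GL₂(ℂ), AH(w,w') = H(Bw,Bw') ∀w,w'} has dimension 3, and G(Ω₃, H) acts transitively on the Lorentz cone Ω₃ = {x ∈ ℝ³ : x₁² − x₂² − x₃² > 0, x₁ > 0}. -/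
open Matrix

noncomputable def cc (x : Fin 3 → ℝ) : ℝ := Real.sqrt ((x 0)^2 - (x 1)^2 - (x 2)^2)

noncomputable def MM (x : Fin 3 → ℝ) : Matrix (Fin 3) (Fin 3) ℝ :=
  !![x 0, x 1 - (x 2)^2/(x 0 - x 1), cc x * x 2/(x 0 - x 1);
     x 1, x 0 - (x 2)^2/(x 0 - x 1), cc x * x 2/(x 0 - x 1);
     x 2, -(x 2), cc x]

noncomputable def MI (x : Fin 3 → ℝ) : Matrix (Fin 3) (Fin 3) ℝ :=
  !![x 0/((x 0)^2 - (x 1)^2 - (x 2)^2), -(x 1)/((x 0)^2 - (x 1)^2 - (x 2)^2), -(x 2)/((x 0)^2 - (x 1)^2 - (x 2)^2);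
     (x 2)^2/(((x 0)^2 - (x 1)^2 - (x 2)^2)*(x 0 - x 1)) - x 1/((x 0)^2 - (x 1)^2 - (x 2)^2),
       x 0/((x 0)^2 - (x 1)^2 - (x 2)^2) - (x 2)^2/(((x 0)^2 - (x 1)^2 - (x 2)^2)*(x 0 - x 1)),
       -(x 2)/((x 0)^2 - (x 1)^2 - (x 2)^2);
     -(x 2)/(cc x*(x 0 - x 1)), x 2/(cc x*(x 0 - x 1)), 1/cc x]

lemma basic15 {x : Fin 3 → ℝ} (hx : (x 1)^2 + (x 2)^2 < (x 0)^2 ∧ 0 < x 0) :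
    0 < (x 0)^2 - (x 1)^2 - (x 2)^2 ∧ 0 < x 0 - x 1 ∧ 0 < cc x ∧
      cc x ^ 2 = (x 0)^2 - (x 1)^2 - (x 2)^2 := by
  obtain ⟨h1, h2⟩ := hx
  have hQ : 0 < (x 0)^2 - (x 1)^2 - (x 2)^2 := by nlinarith [sq_nonneg (x 2)]
  have hd : 0 < x 0 - x 1 := by nlinarith [sq_nonneg (x 2), sq_nonneg (x 0 + x 1)]
  exact ⟨hQ, hd, Real.sqrt_pos.mpr hQ, Real.sq_sqrt hQ.le⟩

lemma MM_q {x : Fin 3 → ℝ} (hd : x 0 - x 1 ≠ 0)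
    (hc2 : cc x ^ 2 = (x 0)^2 - (x 1)^2 - (x 2)^2) (z : Fin 3 → ℝ) :
    let w := (MM x).mulVec z
    w 0 ^2 - w 1 ^2 - w 2 ^2
      = ((x 0)^2 - (x 1)^2 - (x 2)^2) * ((z 0)^2 - (z 1)^2 - (z 2)^2) := by
  intro w
  have hw0 : w 0 = x 0 * z 0 + (x 1 - (x 2)^2/(x 0 - x 1)) * z 1 + cc x * x 2/(x 0 - x 1) * z 2 := by
    simp [w, MM, Matrix.mulVec, dotProduct, Fin.sum_univ_three]
  have hw1 : w 1 = x 1 * z 0 + (x 0 - (x 2)^2/(x 0 - x 1)) * z 1 + cc x * x 2/(x 0 - x 1) * z 2 := by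
    simp [w, MM, Matrix.mulVec, dotProduct, Fin.sum_univ_three]
  have hw2 : w 2 = x 2 * z 0 + -(x 2) * z 1 + cc x * z 2 := by
    simp [w, MM, Matrix.mulVec, dotProduct, Fin.sum_univ_three]
  have key : ∀ C : ℝ,
      (x 0 * z 0 + (x 1 - (x 2)^2/(x 0 - x 1)) * z 1 + C * x 2/(x 0 - x 1) * z 2)^2
      - (x 1 * z 0 + (x 0 - (x 2)^2/(x 0 - x 1)) * z 1 + C * x 2/(x 0 - x 1) * z 2)^2
      - (x 2 * z 0 + -(x 2) * z 1 + C * z 2)^2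
      = ((x 0)^2 - (x 1)^2 - (x 2)^2) * ((z 0)^2 - (z 1)^2 - (z 2)^2)
        + ((x 0)^2 - (x 1)^2 - (x 2)^2 - C^2) * (z 2)^2 := by
    intro C
    field_simp
    ring
  rw [hw0, hw1, hw2, key (cc x), hc2]
  ring

lemma MM_diff {x : Fin 3 → ℝ} (z : Fin 3 → ℝ) :
    let w := (MM x).mulVec z
    w 0 - w 1 = (x 0 - x 1) * (z 0 - z 1) := by
  intro w
  have hw0 : w 0 = x 0 * z 0 + (x 1 - (x 2)^2/(x 0 - x 1)) * z 1 + cc x * x 2/(x 0 - x 1) * z 2 := by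
    simp [w, MM, Matrix.mulVec, dotProduct, Fin.sum_univ_three]
  have hw1 : w 1 = x 1 * z 0 + (x 0 - (x 2)^2/(x 0 - x 1)) * z 1 + cc x * x 2/(x 0 - x 1) * z 2 := by
    simp [w, MM, Matrix.mulVec, dotProduct, Fin.sum_univ_three]
  rw [hw0, hw1]; ring

lemma MM_mem {x z : Fin 3 → ℝ} (hx : (x 1)^2 + (x 2)^2 < (x 0)^2 ∧ 0 < x 0)
    (hz : (z 1)^2 + (z 2)^2 < (z 0)^2 ∧ 0 < z 0) :
    let w := (MM x).mulVec z
    (w 1)^2 + (w 2)^2 < (w 0)^2 ∧ 0 < w 0 := by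
  obtain ⟨hQ, hd, hc, hc2⟩ := basic15 hx
  obtain ⟨hQz, hdz, _, _⟩ := basic15 hz
  intro w
  have h2 : 0 < w 0 ^2 - w 1 ^2 - w 2 ^2 := by
    rw [MM_q hd.ne' hc2 z]; positivity
  have h1 : 0 < w 0 - w 1 := by rw [MM_diff z]; positivity
  constructor
  · nlinarith
  · nlinarith [sq_nonneg (w 2), sq_nonneg (w 0 + w 1)]

lemma MI_mul_MM {x : Fin 3 → ℝ} (hx : (x 1)^2 + (x 2)^2 < (x 0)^2 ∧ 0 < x 0) :
    MI x * MM x = 1 := by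
  obtain ⟨hQ, hd, hc, hc2⟩ := basic15 hx
  have hQ' := hQ.ne'
  have hd' := hd.ne'
  have hc' := hc.ne'
  ext i j
  fin_cases i <;> fin_cases j <;>
    · simp only [MI, MM, Matrix.mul_apply, Fin.sum_univ_three, Matrix.one_apply,
        Matrix.cons_val', Matrix.cons_val_zero, Matrix.cons_val_one, Matrix.head_cons,
        Matrix.head_fin_const, Matrix.empty_val', Matrix.cons_val_fin_one, Matrix.cons_val, Matrix.cons_val_two, Matrix.tail_cons, Matrix.of_apply]
      norm_num [Fin.ext_iff]
      all_goals field_simp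
      all_goals linarith [hc2]

lemma MM_mul_MI {x : Fin 3 → ℝ} (hx : (x 1)^2 + (x 2)^2 < (x 0)^2 ∧ 0 < x 0) :
    MM x * MI x = 1 := by
  obtain ⟨hQ, hd, hc, hc2⟩ := basic15 hx
  have hQ' := hQ.ne'
  have hd' := hd.ne'
  have hc' := hc.ne'
  ext i j
  fin_cases i <;> fin_cases j <;>
    · simp only [MI, MM, Matrix.mul_apply, Fin.sum_univ_three, Matrix.one_apply,
        Matrix.cons_val', Matrix.cons_val_zero, Matrix.cons_val_one, Matrix.head_cons,
        Matrix.head_fin_const, Matrix.empty_val', Matrix.cons_val_fin_one, Matrix.cons_val, Matrix.cons_val_two, Matrix.tail_cons, Matrix.of_apply]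
      norm_num [Fin.ext_iff]
      all_goals field_simp
      all_goals linarith [hc2]

lemma MI_mem {x z : Fin 3 → ℝ} (hx : (x 1)^2 + (x 2)^2 < (x 0)^2 ∧ 0 < x 0)
    (hz : (z 1)^2 + (z 2)^2 < (z 0)^2 ∧ 0 < z 0) :
    let w := (MI x).mulVec z
    (w 1)^2 + (w 2)^2 < (w 0)^2 ∧ 0 < w 0 := by
  obtain ⟨hQ, hd, hc, hc2⟩ := basic15 hx
  obtain ⟨hQz, hdz, _, _⟩ := basic15 hz
  intro w
  have hz' : z = (MM x).mulVec w := by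
    show z = (MM x).mulVec ((MI x).mulVec z)
    rw [Matrix.mulVec_mulVec, MM_mul_MI hx, Matrix.one_mulVec]
  have hq := MM_q hd.ne' hc2 w
  have hdf := MM_diff (x := x) w
  simp only at hq hdf
  rw [← hz'] at hq hdf
  have h2 : 0 < w 0 ^2 - w 1 ^2 - w 2 ^2 := by
    have : w 0 ^2 - w 1 ^2 - w 2 ^2 = ((z 0)^2 - (z 1)^2 - (z 2)^2) / ((x 0)^2 - (x 1)^2 - (x 2)^2) := by
      field_simp
      linarith [hq]
    rw [this]; positivity
  have h1 : 0 < w 0 - w 1 := by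
    have : w 0 - w 1 = (z 0 - z 1) / (x 0 - x 1) := by
      field_simp
      linarith [hdf]
    rw [this]; positivity
  constructor
  · nlinarith
  · nlinarith [sq_nonneg (w 2), sq_nonneg (w 0 + w 1)]

lemma MM_mulVec_e0 {x : Fin 3 → ℝ} :
    (MM x).mulVec ![1,0,0] = x := by
  funext i
  fin_cases i <;>
    simp [MM, Matrix.mulVec, dotProduct, Fin.sum_univ_three]

lemma MI_mulVec_x {x : Fin 3 → ℝ} (hx : (x 1)^2 + (x 2)^2 < (x 0)^2 ∧ 0 < x 0) :
    (MI x).mulVec x = ![1,0,0] := by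
  obtain ⟨hQ, hd, hc, hc2⟩ := basic15 hx
  have hQ' := hQ.ne'
  have hd' := hd.ne'
  have hc' := hc.ne'
  funext i
  fin_cases i <;>
    · simp only [MI, Matrix.mulVec, dotProduct, Fin.sum_univ_three,
        Matrix.cons_val', Matrix.cons_val_zero, Matrix.cons_val_one, Matrix.head_cons,
        Matrix.head_fin_const, Matrix.empty_val', Matrix.cons_val_fin_one, Matrix.cons_val, Matrix.cons_val_two, Matrix.tail_cons, Matrix.of_apply]
      norm_num [Fin.ext_iff]
      all_goals field_simp
      all_goals ring

lemma MM_mulVec_v {x : Fin 3 → ℝ} (hx : (x 1)^2 + (x 2)^2 < (x 0)^2 ∧ 0 < x 0) :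
    (MM x).mulVec ![1,1,0] = (((x 0)^2 - (x 1)^2 - (x 2)^2)/(x 0 - x 1)) • ![1,1,0] := by
  obtain ⟨hQ, hd, hc, hc2⟩ := basic15 hx
  have hd' := hd.ne'
  funext i
  fin_cases i <;>
    · simp only [MM, Matrix.mulVec, dotProduct, Fin.sum_univ_three, Pi.smul_apply,
        smul_eq_mul, Matrix.cons_val', Matrix.cons_val_zero, Matrix.cons_val_one, Matrix.head_cons,
        Matrix.head_fin_const, Matrix.empty_val', Matrix.cons_val_fin_one, Matrix.cons_val, Matrix.cons_val_two, Matrix.tail_cons, Matrix.of_apply]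
      norm_num [Fin.ext_iff]
      all_goals field_simp
      all_goals ring

lemma MI_mulVec_v {x : Fin 3 → ℝ} (hx : (x 1)^2 + (x 2)^2 < (x 0)^2 ∧ 0 < x 0) :
    (MI x).mulVec ![1,1,0] = ((x 0 - x 1)/((x 0)^2 - (x 1)^2 - (x 2)^2)) • ![1,1,0] := by
  obtain ⟨hQ, hd, hc, hc2⟩ := basic15 hx
  have hQ' := hQ.ne'
  have hd' := hd.ne'
  have hc' := hc.ne'
  funext i
  fin_cases i <;>
    · simp only [MI, Matrix.mulVec, dotProduct, Fin.sum_univ_three, Pi.smul_apply,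
        smul_eq_mul, Matrix.cons_val', Matrix.cons_val_zero, Matrix.cons_val_one, Matrix.head_cons,
        Matrix.head_fin_const, Matrix.empty_val', Matrix.cons_val_fin_one, Matrix.cons_val, Matrix.cons_val_two, Matrix.tail_cons, Matrix.of_apply]
      norm_num [Fin.ext_iff]
      all_goals field_simp
      all_goals ring


/-- For the Lorentz cone `Ω₃ ⊆ ℝ³` and the Hermitian form
`H(w,w') = (1,1,0)·(∑ conj(wⱼ)w'ⱼ)` on `ℂ²`, the group `G(Ω₃, H)` has
dimension 3 (its Lie algebra, described infinitesimally, has dimension 3) and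
acts transitively on `Ω₃`. -/
theorem stmt_15 (Ω₃ : Set (Fin 3 → ℝ))
    (hΩ₃ : Ω₃ = {x | (x 1) ^ 2 + (x 2) ^ 2 < (x 0) ^ 2 ∧ 0 < x 0})
    (Hf : (Fin 2 → ℂ) → (Fin 2 → ℂ) → (Fin 3 → ℂ))
    (hHf : Hf = fun w w' => ![∑ j, (starRingEnd ℂ) (w j) * w' j,
      ∑ j, (starRingEnd ℂ) (w j) * w' j, 0])
    (G : Set (Matrix (Fin 3) (Fin 3) ℝ))
    (hG : G = {A | IsUnit A ∧ A.mulVec '' Ω₃ = Ω₃ ∧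
      ∃ B : Matrix (Fin 2) (Fin 2) ℂ, IsUnit B ∧ ∀ w w' : Fin 2 → ℂ,
        (fun l => ∑ i, (A l i : ℂ) * Hf w w' i) = Hf (B.mulVec w) (B.mulVec w')})
    (g : Set (Matrix (Fin 3) (Fin 3) ℝ))
    (hg : g = {A | (∃ lam p q r : ℝ, A = !![lam, p, q; p, lam, r; q, -r, lam]) ∧
      ∃ B : Matrix (Fin 2) (Fin 2) ℂ, ∀ w w' : Fin 2 → ℂ,
        (fun l => ∑ i, (A l i : ℂ) * Hf w w' i)
          = Hf (B.mulVec w) w' + Hf w (B.mulVec w')}) :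
    Module.finrank ℝ (Submodule.span ℝ g) = 3 ∧
    ∀ x ∈ Ω₃, ∀ y ∈ Ω₃, ∃ A ∈ G, A.mulVec x = y := by
  subst hΩ₃ hHf hG hg
  constructor
  · -- dimension
    -- membership helper
    have hmem : ∀ l p q : ℝ, (!![l, p, q; p, l, q; q, -q, l] : Matrix (Fin 3) (Fin 3) ℝ) ∈
        {A : Matrix (Fin 3) (Fin 3) ℝ | (∃ lam p q r : ℝ, A = !![lam, p, q; p, lam, r; q, -r, lam]) ∧
        ∃ B : Matrix (Fin 2) (Fin 2) ℂ, ∀ w w' : Fin 2 → ℂ,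
          (fun ll => ∑ i, ((!![l, p, q; p, l, q; q, -q, l] : Matrix (Fin 3) (Fin 3) ℝ) ll i : ℂ) *
            ![∑ j, (starRingEnd ℂ) (w j) * w' j, ∑ j, (starRingEnd ℂ) (w j) * w' j, 0] i)
            = ![∑ j, (starRingEnd ℂ) ((B.mulVec w) j) * w' j, ∑ j, (starRingEnd ℂ) ((B.mulVec w) j) * w' j, 0]
              + ![∑ j, (starRingEnd ℂ) (w j) * (B.mulVec w') j, ∑ j, (starRingEnd ℂ) (w j) * (B.mulVec w') j, 0]} := by
      intro l p q
      constructor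
      · exact ⟨l, p, q, q, rfl⟩
      · refine ⟨!![(((l+p)/2 : ℝ) : ℂ), 0; 0, (((l+p)/2 : ℝ) : ℂ)], fun w w' => ?_⟩
        funext ll
        fin_cases ll <;>
          simp [Fin.sum_univ_two, Fin.sum_univ_three, Matrix.mulVec, dotProduct,
              Complex.conj_ofReal, map_ofNat] <;>
          (try push_cast) <;> (try ring)
    -- forward: every element of g has the symmetric form
    have hform : ∀ A ∈ {A : Matrix (Fin 3) (Fin 3) ℝ |
        (∃ lam p q r : ℝ, A = !![lam, p, q; p, lam, r; q, -r, lam]) ∧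
        ∃ B : Matrix (Fin 2) (Fin 2) ℂ, ∀ w w' : Fin 2 → ℂ,
          (fun ll => ∑ i, (A ll i : ℂ) *
            ![∑ j, (starRingEnd ℂ) (w j) * w' j, ∑ j, (starRingEnd ℂ) (w j) * w' j, 0] i)
            = ![∑ j, (starRingEnd ℂ) ((B.mulVec w) j) * w' j, ∑ j, (starRingEnd ℂ) ((B.mulVec w) j) * w' j, 0]
              + ![∑ j, (starRingEnd ℂ) (w j) * (B.mulVec w') j, ∑ j, (starRingEnd ℂ) (w j) * (B.mulVec w') j, 0]},
        ∃ l p q : ℝ, A = !![l, p, q; p, l, q; q, -q, l] := by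
      rintro A ⟨⟨lam, p, q, r, rfl⟩, B, hB⟩
      refine ⟨lam, p, q, ?_⟩
      have h2 := congrFun (hB ![1,0] ![1,0]) 2
      simp [Fin.sum_univ_two, Fin.sum_univ_three] at h2
      have hqr : q = r := by
        have h2' : q + -r = 0 := by exact_mod_cast h2
        linarith
      rw [hqr]
    -- span computation
    have hspan : Submodule.span ℝ {A : Matrix (Fin 3) (Fin 3) ℝ |
        (∃ lam p q r : ℝ, A = !![lam, p, q; p, lam, r; q, -r, lam]) ∧
        ∃ B : Matrix (Fin 2) (Fin 2) ℂ, ∀ w w' : Fin 2 → ℂ,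
          (fun ll => ∑ i, (A ll i : ℂ) *
            ![∑ j, (starRingEnd ℂ) (w j) * w' j, ∑ j, (starRingEnd ℂ) (w j) * w' j, 0] i)
            = ![∑ j, (starRingEnd ℂ) ((B.mulVec w) j) * w' j, ∑ j, (starRingEnd ℂ) ((B.mulVec w) j) * w' j, 0]
              + ![∑ j, (starRingEnd ℂ) (w j) * (B.mulVec w') j, ∑ j, (starRingEnd ℂ) (w j) * (B.mulVec w') j, 0]}
        = Submodule.span ℝ (Set.range
            ![(!![1,0,0;0,1,0;0,0,1] : Matrix (Fin 3) (Fin 3) ℝ),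
              !![0,1,0;1,0,0;0,0,0], !![0,0,1;0,0,1;1,-1,0]]) := by
      apply le_antisymm
      · rw [Submodule.span_le]
        intro A hA
        obtain ⟨l, p, q, rfl⟩ := hform A hA
        have hdec : (!![l, p, q; p, l, q; q, -q, l] : Matrix (Fin 3) (Fin 3) ℝ)
            = l • !![1,0,0;0,1,0;0,0,1] + p • !![0,1,0;1,0,0;0,0,0] + q • !![0,0,1;0,0,1;1,-1,0] := by
          ext i j
          fin_cases i <;> fin_cases j <;> simp
        rw [hdec]
        refine Submodule.add_mem _ (Submodule.add_mem _ ?_ ?_) ?_ <;>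
          refine Submodule.smul_mem _ _ (Submodule.subset_span ?_)
        · exact ⟨0, rfl⟩
        · exact ⟨1, rfl⟩
        · exact ⟨2, rfl⟩
      · rw [Submodule.span_le]
        rintro A ⟨i, rfl⟩
        apply Submodule.subset_span
        fin_cases i
        · have h := hmem 1 0 0
          simpa using h
        · have h := hmem 0 1 0
          simpa using h
        · have h := hmem 0 0 1
          simpa using h
    rw [hspan]
    have hli : LinearIndependent ℝ
        ![(!![1,0,0;0,1,0;0,0,1] : Matrix (Fin 3) (Fin 3) ℝ),
          !![0,1,0;1,0,0;0,0,0], !![0,0,1;0,0,1;1,-1,0]] := by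
      apply Fintype.linearIndependent_iff.mpr
      intro co h
      simp [Fin.sum_univ_three] at h
      have h00 := congrFun (congrFun h 0) 0
      have h01 := congrFun (congrFun h 0) 1
      have h02 := congrFun (congrFun h 0) 2
      simp at h00 h01 h02
      intro i
      fin_cases i
      exacts [h00, h01, h02]
    rw [finrank_span_eq_card hli]
    simp
  · -- transitivity
    intro x hx y hy
    replace hx : (x 1)^2 + (x 2)^2 < (x 0)^2 ∧ 0 < x 0 := hx
    replace hy : (y 1)^2 + (y 2)^2 < (y 0)^2 ∧ 0 < y 0 := hy
    obtain ⟨hQx, hdx, hcx, hcx2⟩ := basic15 hx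
    obtain ⟨hQy, hdy, hcy, hcy2⟩ := basic15 hy
    have hone : (MM y * MI x) * (MM x * MI y) = 1 := by
      rw [mul_assoc, ← mul_assoc (MI x), MI_mul_MM hx, one_mul, MM_mul_MI hy]
    have hone' : (MM x * MI y) * (MM y * MI x) = 1 := by
      rw [mul_assoc, ← mul_assoc (MI y), MI_mul_MM hy, one_mul, MM_mul_MI hx]
    refine ⟨MM y * MI x, ⟨isUnit_iff_exists.mpr ⟨MM x * MI y, hone, hone'⟩, ?_, ?_⟩, ?_⟩
    · -- image
      ext z
      simp only [Set.mem_image, Set.mem_setOf_eq]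
      constructor
      · rintro ⟨u, hu, rfl⟩
        rw [← Matrix.mulVec_mulVec]
        exact MM_mem hy (MI_mem hx hu)
      · intro hz2
        refine ⟨(MM x).mulVec ((MI y).mulVec z), MM_mem hx (MI_mem hy hz2), ?_⟩
        rw [Matrix.mulVec_mulVec, Matrix.mulVec_mulVec, mul_assoc, hone, Matrix.one_mulVec]
    · -- the B part
      set κ := ((x 0 - x 1)/((x 0)^2-(x 1)^2-(x 2)^2)) * (((y 0)^2-(y 1)^2-(y 2)^2)/(y 0 - y 1)) with hκdef
      have hκ : 0 < κ := mul_pos (div_pos hdx hQx) (div_pos hQy hdy)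
      set A := MM y * MI x with hA
      have hAv : A.mulVec ![1,1,0] = κ • ![1,1,0] := by
        rw [hA, ← Matrix.mulVec_mulVec, MI_mulVec_v hx, Matrix.mulVec_smul, MM_mulVec_v hy,
          smul_smul]
      have h0 := congrFun hAv 0
      have h1 := congrFun hAv 1
      have h2v := congrFun hAv 2
      simp [Matrix.mulVec, dotProduct, Fin.sum_univ_three] at h0 h1 h2v
      have hs : ((Real.sqrt κ : ℝ) : ℂ) * ((Real.sqrt κ : ℝ) : ℂ) = (κ : ℂ) := by
        rw [← Complex.ofReal_mul, Real.mul_self_sqrt hκ.le]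
      have hsne : ((Real.sqrt κ : ℝ) : ℂ) ≠ 0 := by
        exact_mod_cast (Real.sqrt_pos.mpr hκ).ne'
      refine ⟨!![((Real.sqrt κ : ℝ) : ℂ), 0; 0, ((Real.sqrt κ : ℝ) : ℂ)], ?_, fun w w' => ?_⟩
      · rw [Matrix.isUnit_iff_isUnit_det, Matrix.det_fin_two_of]
        simp only [mul_zero, zero_mul, sub_zero]
        exact (isUnit_iff_ne_zero).mpr (mul_ne_zero hsne hsne)
      · funext ll
        have hc0 : ((A 0 0 : ℝ) : ℂ) + ((A 0 1 : ℝ) : ℂ) = (κ : ℂ) := by exact_mod_cast h0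
        have hc1 : ((A 1 0 : ℝ) : ℂ) + ((A 1 1 : ℝ) : ℂ) = (κ : ℂ) := by exact_mod_cast h1
        have hc2 : ((A 2 0 : ℝ) : ℂ) + ((A 2 1 : ℝ) : ℂ) = 0 := by exact_mod_cast h2v
        fin_cases ll
        · simp [Fin.sum_univ_two, Fin.sum_univ_three, Matrix.mulVec, dotProduct,
            Complex.conj_ofReal]
          linear_combination ((starRingEnd ℂ) (w 0) * w' 0 + (starRingEnd ℂ) (w 1) * w' 1) * (hc0 - hs)
        · simp [Fin.sum_univ_two, Fin.sum_univ_three, Matrix.mulVec, dotProduct,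
            Complex.conj_ofReal]
          linear_combination ((starRingEnd ℂ) (w 0) * w' 0 + (starRingEnd ℂ) (w 1) * w' 1) * (hc1 - hs)
        · simp [Fin.sum_univ_two, Fin.sum_univ_three, Matrix.mulVec, dotProduct,
            Complex.conj_ofReal]
          linear_combination ((starRingEnd ℂ) (w 0) * w' 0 + (starRingEnd ℂ) (w 1) * w' 1) * hc2
    · -- A x = y
      rw [← Matrix.mulVec_mulVec, MI_mulVec_x hx, MM_mulVec_e0]
end

section
/- Let Ω₃ be the Lorentz cone in ℝ³ and let H(w,w) = u|w₁|² + v|w₂|² be a diagonal Ω₃-Hermitian form on ℂ² with u = (1,1,0) and v = (v₁,v₂,v₃) ∈ closure(Ω₃)∖{0}, such that moreover the space of matrices in 𝔤𝔩₂(ℂ) skew-Hermitian with respect to all three components of H has dimension 2 (s = 2). Then the Lie algebra of G(Ω₃,H) — i.e., {A ∈ 𝔤(Ω₃) : ∃B ∈ 𝔤𝔩₂(ℂ), AH(w,w') = H(Bw,w') + H(w,Bw') ∀w,w'} — has dimension at most 2. In particular G(Ω₃,H) does not act transitively on Ω₃. -/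
set_option maxHeartbeats 1600000

open Matrix Complex

lemma range_two {α : Type*} (a b : α) : Set.range ![a, b] = {a, b} := by
  ext x; simp [Fin.exists_fin_two]; tauto


private lemma aux_hvne (v : Fin 3 → ℝ) (hv1 : (v 1) ^ 2 + (v 2) ^ 2 ≤ (v 0) ^ 2)
    (hv2 : 0 ≤ v 0) (hv3 : v ≠ 0)
    (u : Fin 3 → ℝ) (hu : u = ![1, 1, 0])
    (Hf : (Fin 2 → ℂ) → (Fin 2 → ℂ) → (Fin 3 → ℂ))
    (hHf : Hf = fun w w' => fun l =>
      (u l : ℂ) * ((starRingEnd ℂ) (w 0) * w' 0) +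
      (v l : ℂ) * ((starRingEnd ℂ) (w 1) * w' 1))
    (hs : Module.finrank ℝ (Submodule.span ℝ
      {B : Matrix (Fin 2) (Fin 2) ℂ | ∀ w w' : Fin 2 → ℂ,
        Hf (B.mulVec w) w' + Hf w (B.mulVec w') = 0}) = 2) :
    ¬ (v 0 = v 1 ∧ v 2 = 0) := by
  rintro ⟨he, h2⟩
  have hv0' : 0 < v 0 := by
    rcases lt_or_eq_of_le hv2 with h | h
    · exact h
    · exfalso; apply hv3; funext i; fin_cases i <;> simp <;> nlinarith
  obtain ⟨c, hc⟩ : ∃ c : ℝ, v 0 = c := ⟨_, rfl⟩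
  have hvl : ∀ l, (v l : ℂ) = (c : ℂ) * (u l : ℂ) := by
    intro l; fin_cases l <;> simp [hu, h2, ← he, ← hc]
  set B1 : Matrix (Fin 2) (Fin 2) ℂ := !![Complex.I, 0; 0, Complex.I] with hB1
  set B2 : Matrix (Fin 2) (Fin 2) ℂ := !![Complex.I, 0; 0, -Complex.I] with hB2
  set B3 : Matrix (Fin 2) (Fin 2) ℂ := !![0, -(c:ℂ); 1, 0] with hB3
  set K : Set (Matrix (Fin 2) (Fin 2) ℂ) := {B : Matrix (Fin 2) (Fin 2) ℂ | ∀ w w' : Fin 2 → ℂ,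
        Hf (B.mulVec w) w' + Hf w (B.mulVec w') = 0} with hK
  have m1 : B1 ∈ K := by
    intro w w'; funext l
    simp [hHf, hB1, Matrix.mulVec, dotProduct, Fin.sum_univ_two, map_add, _root_.map_mul,
      Complex.conj_I]
    ring
  have m2 : B2 ∈ K := by
    intro w w'; funext l
    simp [hHf, hB2, Matrix.mulVec, dotProduct, Fin.sum_univ_two, map_add, _root_.map_mul,
      Complex.conj_I]
    ring
  have m3 : B3 ∈ K := by
    intro w w'; funext l
    simp [hHf, hB3, Matrix.mulVec, dotProduct, Fin.sum_univ_two, map_add, _root_.map_mul,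
      hvl, Complex.conj_ofReal]
    ring
  have hli : LinearIndependent ℝ ![B1, B2, B3] := by
    rw [Fintype.linearIndependent_iff]
    intro g hg
    rw [Fin.sum_univ_three] at hg
    simp only [Matrix.cons_val_zero, Matrix.cons_val_one, Matrix.head_cons] at hg
    have e10 := congrFun (congrFun hg 1) 0
    have e00 := congrFun (congrFun hg 0) 0
    have e11 := congrFun (congrFun hg 1) 1
    simp [hB1, hB2, hB3, Complex.ext_iff] at e10 e00 e11
    intro i; fin_cases i <;> simp <;> linarith
  have hsub : Submodule.span ℝ (Set.range ![B1,B2,B3]) ≤ Submodule.span ℝ K := by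
    apply Submodule.span_mono
    rw [Set.range_subset_iff]
    intro i; fin_cases i <;> assumption
  have h3 : Module.finrank ℝ (Submodule.span ℝ (Set.range ![B1,B2,B3])) = 3 := by
    rw [finrank_span_eq_card hli]; simp
  have := Submodule.finrank_mono hsub
  rw [h3, hs] at this
  omega



private lemma aux_part2 (v : Fin 3 → ℝ) (hv1 : (v 1) ^ 2 + (v 2) ^ 2 ≤ (v 0) ^ 2)
    (hv2 : 0 ≤ v 0) (hv3 : v ≠ 0)
    (Ω₃ : Set (Fin 3 → ℝ))
    (hΩ₃ : Ω₃ = {x | (x 1) ^ 2 + (x 2) ^ 2 < (x 0) ^ 2 ∧ 0 < x 0})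
    (u : Fin 3 → ℝ) (hu : u = ![1, 1, 0])
    (Hf : (Fin 2 → ℂ) → (Fin 2 → ℂ) → (Fin 3 → ℂ))
    (hHf : Hf = fun w w' => fun l =>
      (u l : ℂ) * ((starRingEnd ℂ) (w 0) * w' 0) +
      (v l : ℂ) * ((starRingEnd ℂ) (w 1) * w' 1))
    (hvne : ¬ (v 0 = v 1 ∧ v 2 = 0)) :
    ¬ ∀ x ∈ Ω₃, ∀ y ∈ Ω₃, ∃ A : Matrix (Fin 3) (Fin 3) ℝ,
      (IsUnit A ∧ A.mulVec '' Ω₃ = Ω₃ ∧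
        ∃ B : Matrix (Fin 2) (Fin 2) ℂ, IsUnit B ∧ ∀ w w' : Fin 2 → ℂ,
          (fun l => ∑ i, (A l i : ℂ) * Hf w w' i)
            = Hf (B.mulVec w) (B.mulVec w')) ∧
      A.mulVec x = y := by
  -- basic positivity facts
  have hv0 : 0 < v 0 := by
    rcases lt_or_eq_of_le hv2 with h | h
    · exact h
    · exfalso; apply hv3; funext i; fin_cases i <;> simp <;> nlinarith
  have hv01 : v 1 < v 0 := by
    rcases lt_or_eq_of_le (show v 1 ≤ v 0 by nlinarith) with h | h
    · exact h
    · exfalso; exact hvne ⟨h.symm, by nlinarith⟩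
  intro htrans
  -- x = u + v ∈ Ω₃
  have hx : (u + v) ∈ Ω₃ := by
    rw [hΩ₃]; constructor <;> simp [hu] <;> nlinarith
  set V : Submodule ℝ (Fin 3 → ℝ) := Submodule.span ℝ {u, v} with hV
  -- one of y1 y2 not in V
  have hy1 : (![2,0,1] : Fin 3 → ℝ) ∈ Ω₃ := by rw [hΩ₃]; constructor <;> norm_num [Matrix.cons_val_two, Matrix.vecHead, Matrix.vecTail]
  have hy2 : (![2,0,-1] : Fin 3 → ℝ) ∈ Ω₃ := by rw [hΩ₃]; constructor <;> norm_num [Matrix.cons_val_two, Matrix.vecHead, Matrix.vecTail]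
  have hy : ∃ y ∈ Ω₃, y ∉ V := by
    by_cases h1 : (![2,0,1] : Fin 3 → ℝ) ∈ V
    · refine ⟨![2,0,-1], hy2, fun h2 => ?_⟩
      rw [hV, Submodule.mem_span_pair] at h1 h2
      obtain ⟨a, b, hab⟩ := h1
      obtain ⟨a', b', hab'⟩ := h2
      have e0 := congrFun hab 0
      have e1 := congrFun hab 1
      have e2 := congrFun hab 2
      have f0 := congrFun hab' 0
      have f1 := congrFun hab' 1
      have f2 := congrFun hab' 2
      simp [hu] at e0 e1 e2 f0 f1 f2
      -- a + b v0 = 2, a + b v1 = 0, b v2 = 1 ; a' + b' v0 = 2, a' + b' v1 = 0, b' v2 = -1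
      have hb : (b - b') * (v 0 - v 1) = 0 := by nlinarith
      have : b = b' := by
        rcases mul_eq_zero.mp hb with h | h
        · linarith
        · linarith
      nlinarith
    · exact ⟨![2,0,1], hy1, h1⟩
  obtain ⟨y, hyΩ, hyV⟩ := hy
  obtain ⟨A, ⟨_, _, B, _, hB⟩, hxy⟩ := htrans (u + v) hx y hyΩ
  apply hyV
  have huV : u ∈ V := Submodule.subset_span (by simp)
  have hvV : v ∈ V := Submodule.subset_span (by simp)
  have keyu : A.mulVec u = (normSq (B 0 0)) • u + (normSq (B 1 0)) • v := by
    funext l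
    have h := congrFun (hB ![1,0] ![1,0]) l
    simp [hHf, Matrix.mulVec, dotProduct, Fin.sum_univ_two, Fin.sum_univ_three, hu,
      map_add, _root_.map_mul, ← Complex.normSq_eq_conj_mul_self] at h
    fin_cases l <;>
    · simp [Matrix.mulVec, dotProduct, Fin.sum_univ_three, hu, smul_eq_mul] at h ⊢
      norm_cast at h; linarith
  have keyv : A.mulVec v = (normSq (B 0 1)) • u + (normSq (B 1 1)) • v := by
    funext l
    have h := congrFun (hB ![0,1] ![0,1]) l
    simp [hHf, Matrix.mulVec, dotProduct, Fin.sum_univ_two, Fin.sum_univ_three, hu,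
      map_add, _root_.map_mul, ← Complex.normSq_eq_conj_mul_self] at h
    fin_cases l <;>
    · simp [Matrix.mulVec, dotProduct, Fin.sum_univ_three, hu, smul_eq_mul] at h ⊢
      norm_cast at h; linarith
  have : A.mulVec (u + v) ∈ V := by
    rw [Matrix.mulVec_add, keyu, keyv]
    exact Submodule.add_mem V (Submodule.add_mem V (Submodule.smul_mem V _ huV) (Submodule.smul_mem V _ hvV)) (Submodule.add_mem V (Submodule.smul_mem V _ huV) (Submodule.smul_mem V _ hvV))
  rwa [hxy] at this





private lemma aux_part1 (v : Fin 3 → ℝ) (hv1 : (v 1) ^ 2 + (v 2) ^ 2 ≤ (v 0) ^ 2)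
    (hv2 : 0 ≤ v 0) (hv3 : v ≠ 0)
    (u : Fin 3 → ℝ) (hu : u = ![1, 1, 0])
    (Hf : (Fin 2 → ℂ) → (Fin 2 → ℂ) → (Fin 3 → ℂ))
    (hHf : Hf = fun w w' => fun l =>
      (u l : ℂ) * ((starRingEnd ℂ) (w 0) * w' 0) +
      (v l : ℂ) * ((starRingEnd ℂ) (w 1) * w' 1))
    (hvne : ¬ (v 0 = v 1 ∧ v 2 = 0))
    (hv0 : 0 < v 0) (hv01 : v 1 < v 0) :
    Module.finrank ℝ (Submodule.span ℝ
      {A : Matrix (Fin 3) (Fin 3) ℝ |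
        (∃ lam p q r : ℝ, A = !![lam, p, q; p, lam, r; q, -r, lam]) ∧
        ∃ B : Matrix (Fin 2) (Fin 2) ℂ, ∀ w w' : Fin 2 → ℂ,
          (fun l => ∑ i, (A l i : ℂ) * Hf w w' i)
            = Hf (B.mulVec w) w' + Hf w (B.mulVec w')}) ≤ 2 := by
  set P : Matrix (Fin 3) (Fin 3) ℝ := !![0,1,0;1,0,0;0,0,0] with hP
  set Q : Matrix (Fin 3) (Fin 3) ℝ := !![0,0,1;0,0,1;1,-1,0] with hQ
  set S : Set (Matrix (Fin 3) (Fin 3) ℝ) := {A : Matrix (Fin 3) (Fin 3) ℝ |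
        (∃ lam p q r : ℝ, A = !![lam, p, q; p, lam, r; q, -r, lam]) ∧
        ∃ B : Matrix (Fin 2) (Fin 2) ℂ, ∀ w w' : Fin 2 → ℂ,
          (fun l => ∑ i, (A l i : ℂ) * Hf w w' i)
            = Hf (B.mulVec w) w' + Hf w (B.mulVec w')} with hS
  have hstruct : ∀ A ∈ S, ∃ lam p q : ℝ,
      A = lam • (1 : Matrix (Fin 3) (Fin 3) ℝ) + p • P + q • Q ∧
      p * (v 1 * v 2) + q * (v 2 ^ 2 - v 0 ^ 2 + v 0 * v 1) = 0 ∧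
      p * (v 0 * v 2) + q * (v 2 ^ 2 - v 0 * v 1 + v 1 ^ 2) = 0 := by
    rintro A ⟨⟨lam, p, q, r, hAeq⟩, B, hB⟩
    -- q = r
    have hqr : q = r := by
      have h := congrFun (hB ![1,0] ![1,0]) 2
      simp [hHf, hAeq, Matrix.mulVec, dotProduct, Fin.sum_univ_two, Fin.sum_univ_three,
        hu, map_add, _root_.map_mul] at h
      have h' : q + -r = 0 := by exact_mod_cast h
      linarith
    subst hqr
    have e0 := congrFun (hB ![0,1] ![0,1]) 0
    have e1 := congrFun (hB ![0,1] ![0,1]) 1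
    have e2 := congrFun (hB ![0,1] ![0,1]) 2
    simp [hHf, hAeq, Matrix.mulVec, dotProduct, Fin.sum_univ_two, Fin.sum_univ_three,
      hu, map_add, _root_.map_mul] at e0 e1 e2
    refine ⟨lam, p, q, ?_, ?_, ?_⟩
    · rw [hAeq]
      ext i j
      fin_cases i <;> fin_cases j <;>
        simp [hP, hQ, Matrix.one_apply, Matrix.vecHead, Matrix.vecTail]
    · have hc : ((p * (v 1 * v 2) + q * (v 2 ^ 2 - v 0 ^ 2 + v 0 * v 1) : ℝ) : ℂ) = 0 := by
        push_cast
        linear_combination (v 2 : ℂ) * e0 - (v 0 : ℂ) * e2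
      exact_mod_cast hc
    · have hc : ((p * (v 0 * v 2) + q * (v 2 ^ 2 - v 0 * v 1 + v 1 ^ 2) : ℝ) : ℂ) = 0 := by
        push_cast
        linear_combination (v 2 : ℂ) * e1 - (v 1 : ℂ) * e2
      exact_mod_cast hc
  -- now case split to find R with S ⊆ span {1, R}
  have hmain : ∃ R : Matrix (Fin 3) (Fin 3) ℝ,
      ∀ A ∈ S, A ∈ Submodule.span ℝ (Set.range ![(1 : Matrix (Fin 3) (Fin 3) ℝ), R]) := by
    by_cases h2 : v 2 = 0
    · refine ⟨P, fun A hA => ?_⟩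
      obtain ⟨lam, p, q, hA, hE2, _⟩ := hstruct A hA
      have hq : q = 0 := by
        have hne : v 2 ^ 2 - v 0 ^ 2 + v 0 * v 1 ≠ 0 := by
          rw [h2]; nlinarith
        have := hE2
        rw [h2] at this
        simp at this
        rcases this with h | h
        · exact h
        · exact absurd (by rw [h2]; linarith [h] : v 2 ^ 2 - v 0 ^ 2 + v 0 * v 1 = 0) hne
      rw [range_two]
      rw [Submodule.mem_span_pair]
      exact ⟨lam, p, by rw [hA, hq]; module⟩
    · refine ⟨Q - ((v 2 ^ 2 - v 0 * v 1 + v 1 ^ 2) / (v 0 * v 2)) • P, fun A hA => ?_⟩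
      obtain ⟨lam, p, q, hA, _, hE3⟩ := hstruct A hA
      have hne : v 0 * v 2 ≠ 0 := mul_ne_zero (ne_of_gt hv0) h2
      have hp : p = -(q * ((v 2 ^ 2 - v 0 * v 1 + v 1 ^ 2) / (v 0 * v 2))) := by
        field_simp
        linarith [hE3]
      rw [range_two]
      rw [Submodule.mem_span_pair]
      refine ⟨lam, q, ?_⟩
      rw [hA, hp]
      module
  obtain ⟨R, hR⟩ := hmain
  have hle : Submodule.span ℝ S ≤ Submodule.span ℝ (Set.range ![(1 : Matrix (Fin 3) (Fin 3) ℝ), R]) := by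
    rw [Submodule.span_le]
    exact fun A hA => hR A hA
  haveI hfin : Module.Finite ℝ
      (Submodule.span ℝ (Set.range ![(1 : Matrix (Fin 3) (Fin 3) ℝ), R])) := by
    apply FiniteDimensional.finiteDimensional_submodule
  have h2 := finrank_range_le_card (R := ℝ) ![(1 : Matrix (Fin 3) (Fin 3) ℝ), R]
  rw [Set.finrank] at h2
  simp only [Fintype.card_fin] at h2
  exact le_trans (Submodule.finrank_mono hle) h2


/-- For the diagonal `Ω₃`-Hermitian form `H(w,w) = u|w₁|² + v|w₂|²` on `ℂ²`
with `u = (1,1,0)` and `v ∈ closure(Ω₃) \ {0}`, if the space of matrices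
skew-Hermitian with respect to all three components of `H` has dimension 2,
then the Lie algebra of `G(Ω₃,H)` has dimension at most 2; in particular
`G(Ω₃,H)` does not act transitively on `Ω₃`. -/
theorem stmt_16 (v : Fin 3 → ℝ) (hv1 : (v 1) ^ 2 + (v 2) ^ 2 ≤ (v 0) ^ 2)
    (hv2 : 0 ≤ v 0) (hv3 : v ≠ 0)
    (Ω₃ : Set (Fin 3 → ℝ))
    (hΩ₃ : Ω₃ = {x | (x 1) ^ 2 + (x 2) ^ 2 < (x 0) ^ 2 ∧ 0 < x 0})
    (u : Fin 3 → ℝ) (hu : u = ![1, 1, 0])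
    (Hf : (Fin 2 → ℂ) → (Fin 2 → ℂ) → (Fin 3 → ℂ))
    (hHf : Hf = fun w w' => fun l =>
      (u l : ℂ) * ((starRingEnd ℂ) (w 0) * w' 0) +
      (v l : ℂ) * ((starRingEnd ℂ) (w 1) * w' 1))
    (hs : Module.finrank ℝ (Submodule.span ℝ
      {B : Matrix (Fin 2) (Fin 2) ℂ | ∀ w w' : Fin 2 → ℂ,
        Hf (B.mulVec w) w' + Hf w (B.mulVec w') = 0}) = 2) :
    Module.finrank ℝ (Submodule.span ℝ
      {A : Matrix (Fin 3) (Fin 3) ℝ |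
        (∃ lam p q r : ℝ, A = !![lam, p, q; p, lam, r; q, -r, lam]) ∧
        ∃ B : Matrix (Fin 2) (Fin 2) ℂ, ∀ w w' : Fin 2 → ℂ,
          (fun l => ∑ i, (A l i : ℂ) * Hf w w' i)
            = Hf (B.mulVec w) w' + Hf w (B.mulVec w')}) ≤ 2 ∧
    ¬ ∀ x ∈ Ω₃, ∀ y ∈ Ω₃, ∃ A : Matrix (Fin 3) (Fin 3) ℝ,
      (IsUnit A ∧ A.mulVec '' Ω₃ = Ω₃ ∧
        ∃ B : Matrix (Fin 2) (Fin 2) ℂ, IsUnit B ∧ ∀ w w' : Fin 2 → ℂ,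
          (fun l => ∑ i, (A l i : ℂ) * Hf w w' i)
            = Hf (B.mulVec w) (B.mulVec w')) ∧
      A.mulVec x = y := by
  have hvne : ¬ (v 0 = v 1 ∧ v 2 = 0) := aux_hvne v hv1 hv2 hv3 u hu Hf hHf hs
  have hv0 : 0 < v 0 := by
    rcases lt_or_eq_of_le hv2 with h | h
    · exact h
    · exfalso; apply hv3; funext i; fin_cases i <;> simp <;> nlinarith
  have hv01 : v 1 < v 0 := by
    rcases lt_or_eq_of_le (show v 1 ≤ v 0 by nlinarith) with h | h
    · exact h
    · exfalso; exact hvne ⟨h.symm, by nlinarith⟩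
  exact ⟨aux_part1 v hv1 hv2 hv3 u hu Hf hHf hvne hv0 hv01,
    aux_part2 v hv1 hv2 hv3 Ω₃ hΩ₃ u hu Hf hHf hvne⟩
end

section
/- Let N ≥ 1 and Ĥ : ℂ^N × ℂ^N → ℂ⁴, Ĥ(w,w') = (Σⱼ conj(wⱼ)w'ⱼ, Σⱼ conj(wⱼ)w'ⱼ, 0, 0). Suppose Φ : ℂ⁴ → ℂ^N is ℂ-linear and for every w ∈ ℂ^N the map ℝ⁴ → ℝ⁴, x ↦ Im Ĥ(w, Φ(x)), belongs to 𝔤(Ω₆) = {((λ,p,q,r),(p,λ,s,t),(q,−s,λ,y),(r,−t,−y,λ)) : λ,p,q,r,s,t,y ∈ ℝ}. Then Φ = 0. -/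
open Matrix

/-- Let `Ĥ(w,w') = (∑ conj(wⱼ)w'ⱼ, ∑ conj(wⱼ)w'ⱼ, 0, 0)` on `ℂᴺ`. If a
`ℂ`-linear map `Φ : ℂ⁴ → ℂᴺ` (with matrix `φ`) is such that for every `w` the
real matrix of `x ↦ Im Ĥ(w, Φ(x))` lies in `𝔤(Ω₆)`, then `Φ = 0`. -/
theorem stmt_17 (N : ℕ) (hN : 1 ≤ N) (φ : Fin N → Fin 4 → ℂ)
    (h : ∀ w : Fin N → ℂ, ∃ l p q r s t y : ℝ,
      (Matrix.of fun (i x : Fin 4) =>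
          if i = 0 ∨ i = 1 then (∑ j, (starRingEnd ℂ) (w j) * φ j x).im
          else (0 : ℝ))
        = !![l, p, q, r; p, l, s, t; q, -s, l, y; r, -t, -y, l]) :
    φ = 0 := by
  have key : ∀ (w : Fin N → ℂ) (x : Fin 4),
      (∑ j, (starRingEnd ℂ) (w j) * φ j x).im = 0 := by
    intro w x
    obtain ⟨l, p, q, r, s, t, y, he⟩ := h w
    have e : ∀ i x : Fin 4,
        (if i = (0 : Fin 4) ∨ i = 1 then (∑ j, (starRingEnd ℂ) (w j) * φ j x).im
          else (0 : ℝ))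
        = (!![l, p, q, r; p, l, s, t; q, -s, l, y; r, -t, -y, l]) i x :=
      fun i x => congrFun (congrFun he i) x
    have e00 := e 0 0
    have e01 := e 0 1
    have e02 := e 0 2
    have e03 := e 0 3
    have e10 := e 1 0
    have e20 := e 2 0
    have e30 := e 3 0
    have e22 := e 2 2
    simp at e00 e01 e02 e03 e10 e20 e30 e22
    fin_cases x <;> simp <;> linarith
  funext j x
  have h1 := key (Pi.single j 1) x
  have h2 := key (Pi.single j Complex.I) x
  simp [Pi.single_apply, apply_ite, Finset.sum_ite_eq'] at h1 h2
  simp only [Pi.zero_apply]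
  exact Complex.ext h2 h1
end
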